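/- arXiv:1311.1682 — 7 statements merged into one kernel-verified Lean document; each statement's English description precedes it below -/
import Mathlib

section
/- Let n be a positive integer and g : ℤ → ℂ. Then for every integer l with -n² ≤ l ≤ n²-1, the discrete Fourier transform of the discrete derivative satisfies (Dg)^_n(l) = ψ_n(l) · ĝ_n(l) - E_n(l). -/
open Complex Finset

/-- The discrete derivative: `Dg(j) = n·(g(j+1) - g(j))` for `-n² ≤ j ≤ n²-2`,
and `Dg(n²-1) = 0`. -/
noncomputable def discDeriv (n : ℕ) (g : ℤ → ℂ) : ℤ → ℂ :=
  fun j => if j = (n : ℤ) ^ 2 - 1 then 0 else (n : ℂ) * (g (j + 1) - g j)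

/-- The discrete shift: `Sg(j) = g(j+1)` for `-n² ≤ j ≤ n²-2`, and `Sg(n²-1) = 0`. -/
noncomputable def discShift (n : ℕ) (g : ℤ → ℂ) : ℤ → ℂ :=
  fun j => if j = (n : ℤ) ^ 2 - 1 then 0 else g (j + 1)
/-- The discrete Fourier transform `ĝ_n(l) = (1/n) ∑_{j=-n²}^{n²-1} g(j) e^{-π i j l/n²}`. -/
noncomputable def discFT (n : ℕ) (g : ℤ → ℂ) : ℤ → ℂ :=
  fun l => (1 / (n : ℂ)) * ∑ j ∈ Finset.Icc (-(n : ℤ) ^ 2) ((n : ℤ) ^ 2 - 1),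
    g j * Complex.exp (-((Real.pi : ℂ) * Complex.I * (j : ℂ) * (l : ℂ)) / (n : ℂ) ^ 2)

/-- `ψ_n(l) = n·(e^{π i l/n²} - 1)`. -/
noncomputable def psiF (n : ℕ) (l : ℤ) : ℂ :=
  (n : ℂ) * (Complex.exp ((Real.pi : ℂ) * Complex.I * (l : ℂ) / (n : ℂ) ^ 2) - 1)

/-- `φ_n(l) = n·(e^{-π i l/n²} - 1)`. -/
noncomputable def phiF (n : ℕ) (l : ℤ) : ℂ :=
  (n : ℂ) * (Complex.exp (-((Real.pi : ℂ) * Complex.I * (l : ℂ)) / (n : ℂ) ^ 2) - 1)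

/-- `C_n(l) = g(n²-1)·e^{-π i (n²-1) l/n²} - g(-n²)·e^{π i l}`. -/
noncomputable def CF (n : ℕ) (g : ℤ → ℂ) (l : ℤ) : ℂ :=
  g ((n : ℤ) ^ 2 - 1) *
      Complex.exp (-((Real.pi : ℂ) * Complex.I * ((n : ℂ) ^ 2 - 1) * (l : ℂ)) / (n : ℂ) ^ 2) -
    g (-(n : ℤ) ^ 2) * Complex.exp ((Real.pi : ℂ) * Complex.I * (l : ℂ))

/-- `D_n(l) = -(1/n)·g(-n²)·e^{π i l/n²}·e^{π i l}`. -/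
noncomputable def DF (n : ℕ) (g : ℤ → ℂ) (l : ℤ) : ℂ :=
  -(1 / (n : ℂ)) * g (-(n : ℤ) ^ 2) *
    Complex.exp ((Real.pi : ℂ) * Complex.I * (l : ℂ) / (n : ℂ) ^ 2) *
    Complex.exp ((Real.pi : ℂ) * Complex.I * (l : ℂ))

/-- `C'_n(l) = -(Dg)(-n²)·e^{π i l}`. -/
noncomputable def CF' (n : ℕ) (g : ℤ → ℂ) (l : ℤ) : ℂ :=
  -(discDeriv n g (-(n : ℤ) ^ 2)) * Complex.exp ((Real.pi : ℂ) * Complex.I * (l : ℂ))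

/-- `D'_n(l) = -(1/n)·(Dg)(-n²)·e^{π i l/n²}·e^{π i l}`. -/
noncomputable def DF' (n : ℕ) (g : ℤ → ℂ) (l : ℤ) : ℂ :=
  -(1 / (n : ℂ)) * discDeriv n g (-(n : ℤ) ^ 2) *
    Complex.exp ((Real.pi : ℂ) * Complex.I * (l : ℂ) / (n : ℂ) ^ 2) *
    Complex.exp ((Real.pi : ℂ) * Complex.I * (l : ℂ))

/-- `E_n(l) = φ_n(l)·D_n(l) - C_n(l)`. -/
noncomputable def EF (n : ℕ) (g : ℤ → ℂ) (l : ℤ) : ℂ :=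
  phiF n l * DF n g l - CF n g l

/-- `F_n(l) = ψ_n(l)·φ_n(l)·D_n(l) - ψ_n(l)·C_n(l) + φ_n(l)·D'_n(l) - C'_n(l)`. -/
noncomputable def FF (n : ℕ) (g : ℤ → ℂ) (l : ℤ) : ℂ :=
  psiF n l * phiF n l * DF n g l - psiF n l * CF n g l + phiF n l * DF' n g l - CF' n g l

/-- The discrete Fourier transform of the discrete derivative:
`(Dg)^_n(l) = ψ_n(l) · ĝ_n(l) - E_n(l)` for `-n² ≤ l ≤ n²-1`. -/
theorem discFT_deriv (n : ℕ) (hn : 0 < n) (g : ℤ → ℂ) (l : ℤ)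
    (hl1 : -(n : ℤ) ^ 2 ≤ l) (hl2 : l ≤ (n : ℤ) ^ 2 - 1) :
    discFT n (discDeriv n g) l = psiF n l * discFT n g l - EF n g l := by

  have hn0 : (n : ℂ) ≠ 0 := Nat.cast_ne_zero.mpr hn.ne'
  have hN0 : ((n : ℂ) ^ 2) ≠ 0 := pow_ne_zero _ hn0
  set N : ℤ := (n : ℤ) ^ 2 with hNdef
  have hN1 : 1 ≤ N := by
    have h : 1 ≤ (n : ℤ) := by exact_mod_cast hn
    nlinarith
  set e : ℤ → ℂ := fun j => Complex.exp (-((Real.pi : ℂ) * Complex.I * (j : ℂ) * (l : ℂ)) / (n : ℂ) ^ 2) with he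
  set c : ℂ := Complex.exp ((Real.pi : ℂ) * Complex.I * (l : ℂ) / (n : ℂ) ^ 2) with hc
  set d : ℂ := Complex.exp (-((Real.pi : ℂ) * Complex.I * (l : ℂ)) / (n : ℂ) ^ 2) with hd
  have hcd : c * d = 1 := by
    simp only [hc, hd]
    rw [← Complex.exp_add, ← Complex.exp_zero]
    congr 1; field_simp; ring
  have hec : ∀ k : ℤ, e (k - 1) = c * e k := by
    intro k
    simp only [he, hc]
    rw [← Complex.exp_add]
    congr 1
    push_cast
    field_simp
    ring
  have heN : e (-N) = Complex.exp ((Real.pi : ℂ) * Complex.I * (l : ℂ)) := by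
    simp only [he, hNdef]
    congr 1
    push_cast
    field_simp
  have heN1 : e (N - 1) = Complex.exp (-((Real.pi : ℂ) * Complex.I * ((n : ℂ) ^ 2 - 1) * (l : ℂ)) / (n : ℂ) ^ 2) := by
    simp only [he, hNdef]
    congr 2
    push_cast
    ring
  set S : ℂ := ∑ j ∈ Finset.Icc (-N) (N - 1), g j * e j with hS
  -- split off the top term
  have hsplit : Finset.Icc (-N) (N - 1) = insert (N - 1) (Finset.Icc (-N) (N - 2)) := by
    ext x; simp only [Finset.mem_Icc, Finset.mem_insert]; omega
  have hnotmem : (N - 1) ∉ Finset.Icc (-N) (N - 2) := by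
    simp only [Finset.mem_Icc]; omega
  have hsplit2 : Finset.Icc (-N) (N - 1) = insert (-N) (Finset.Icc (-N + 1) (N - 1)) := by
    ext x; simp only [Finset.mem_Icc, Finset.mem_insert]; omega
  have hnotmem2 : (-N) ∉ Finset.Icc (-N + 1) (N - 1) := by
    simp only [Finset.mem_Icc]; omega
  have hsum1 : ∑ j ∈ Finset.Icc (-N) (N - 1), discDeriv n g j * e j
      = ∑ j ∈ Finset.Icc (-N) (N - 2), (n : ℂ) * (g (j + 1) - g j) * e j := by
    rw [hsplit, Finset.sum_insert hnotmem]
    have : discDeriv n g (N - 1) = 0 := by simp [discDeriv, hNdef]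
    rw [this, zero_mul, zero_add]
    apply Finset.sum_congr rfl
    intro j hj
    simp only [Finset.mem_Icc] at hj
    have : j ≠ (n : ℤ) ^ 2 - 1 := by omega
    simp [discDeriv, this]
  have hshift : ∑ j ∈ Finset.Icc (-N) (N - 2), g (j + 1) * e j
      = c * (S - g (-N) * e (-N)) := by
    have hmap : Finset.Icc (-N + 1) (N - 1) = (Finset.Icc (-N) (N - 2)).map (addRightEmbedding 1) := by
      rw [Finset.map_add_right_Icc]
      congr 1 <;> ring
    have h1 : ∑ k ∈ Finset.Icc (-N + 1) (N - 1), g k * e (k - 1)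
        = ∑ j ∈ Finset.Icc (-N) (N - 2), g (j + 1) * e j := by
      rw [hmap, Finset.sum_map]
      apply Finset.sum_congr rfl
      intro j hj
      simp [addRightEmbedding]
    rw [← h1]
    have h2 : ∑ k ∈ Finset.Icc (-N + 1) (N - 1), g k * e (k - 1)
        = c * ∑ k ∈ Finset.Icc (-N + 1) (N - 1), g k * e k := by
      rw [Finset.mul_sum]
      apply Finset.sum_congr rfl
      intro k _
      rw [hec k]; ring
    rw [h2]
    congr 1
    have : S = g (-N) * e (-N) + ∑ k ∈ Finset.Icc (-N + 1) (N - 1), g k * e k := by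
      rw [hS, hsplit2, Finset.sum_insert hnotmem2]
    rw [this]; ring
  have hmain : ∑ j ∈ Finset.Icc (-N) (N - 2), (n : ℂ) * (g (j + 1) - g j) * e j
      = (n : ℂ) * (c * (S - g (-N) * e (-N)) - (S - g (N - 1) * e (N - 1))) := by
    have expand : ∀ j : ℤ, (n : ℂ) * (g (j + 1) - g j) * e j
        = (n : ℂ) * (g (j + 1) * e j) - (n : ℂ) * (g j * e j) := by intro j; ring
    rw [Finset.sum_congr rfl (fun j _ => expand j), Finset.sum_sub_distrib,
      ← Finset.mul_sum, ← Finset.mul_sum, hshift]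
    have hlast : ∑ j ∈ Finset.Icc (-N) (N - 2), g j * e j = S - g (N - 1) * e (N - 1) := by
      rw [hS, hsplit, Finset.sum_insert hnotmem]; ring
    rw [hlast]
    ring
  have hFT0 : discFT n (discDeriv n g) l
      = (1 / (n : ℂ)) * ∑ j ∈ Finset.Icc (-N) (N - 1), discDeriv n g j * e j := rfl
  have hFT : discFT n (discDeriv n g) l
      = (1 / (n : ℂ)) * ((n : ℂ) * (c * (S - g (-N) * e (-N)) - (S - g (N - 1) * e (N - 1)))) := by
    rw [hFT0, hsum1, hmain]
  have hg : discFT n g l = (1 / (n : ℂ)) * S := rfl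
  rw [hFT, hg, psiF, EF, phiF, CF, DF, ← heN1, ← heN, ← hc, ← hd]
  field_simp
  linear_combination (-(g (-N) * e (-N))) * hcd
end

section
/- Discrete Fourier transform formula: Let n be a positive integer and g : ℤ → ℂ. Then for every integer l with -n² ≤ l ≤ n²-1 and l ≠ 0, ψ_n(l) ≠ 0 and ĝ_n(l) = ((Dg)^_n(l) + E_n(l)) / ψ_n(l) = ((D(Dg))^_n(l) + F_n(l)) / ψ_n(l)², where (Dg)^_n and (D(Dg))^_n denote the discrete Fourier transforms of the first and second discrete derivatives of g. -/
open Complex Finset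

lemma psiF_ne_zero (n : ℕ) (hn : 0 < n) (l : ℤ)
    (hl1 : -(n : ℤ) ^ 2 ≤ l) (hl2 : l ≤ (n : ℤ) ^ 2 - 1) (hl0 : l ≠ 0) :
    psiF n l ≠ 0 := by
  have hn0 : (n : ℂ) ≠ 0 := Nat.cast_ne_zero.2 hn.ne'
  have hπ : (Real.pi : ℂ) ≠ 0 := by
    exact_mod_cast Real.pi_ne_zero
  rw [psiF]
  apply mul_ne_zero hn0
  rw [sub_ne_zero]
  intro h
  rw [Complex.exp_eq_one_iff] at h
  obtain ⟨k, hk⟩ := h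
  have h2 : (Real.pi:ℂ) * Complex.I * (l:ℂ) = (Real.pi:ℂ) * Complex.I * (2*(k:ℂ)*(n:ℂ)^2) := by
    field_simp at hk
    linear_combination (Real.pi:ℂ) * Complex.I * hk
  have hc := mul_left_cancel₀ (mul_ne_zero hπ Complex.I_ne_zero) h2
  have hl : l = 2 * k * (n:ℤ)^2 := by exact_mod_cast hc
  have hn1 : (1:ℤ) ≤ (n:ℤ) := by exact_mod_cast hn
  have hN : (1:ℤ) ≤ (n:ℤ)^2 := by nlinarith
  rcases lt_trichotomy k 0 with h | h | h
  · nlinarith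
  · rw [h] at hl; simp at hl; exact hl0 hl
  · nlinarith

lemma key_sum_by_parts (n : ℕ) (hn : 0 < n) (g : ℤ → ℂ) (l : ℤ) :
    psiF n l * discFT n g l = discFT n (discDeriv n g) l + EF n g l := by
  have hn0 : (n : ℂ) ≠ 0 := Nat.cast_ne_zero.2 hn.ne'
  have hn1 : (1:ℤ) ≤ (n:ℤ) := by exact_mod_cast hn
  have hNpos : (1:ℤ) ≤ (n:ℤ)^2 := by nlinarith
  set E : ℤ → ℂ := fun j =>
    Complex.exp (-((Real.pi : ℂ) * Complex.I * (j : ℂ) * (l : ℂ)) / (n : ℂ) ^ 2) with hEdef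
  set p : ℂ := Complex.exp ((Real.pi : ℂ) * Complex.I * (l : ℂ) / (n : ℂ) ^ 2) with hpdef
  set q1 : ℂ := Complex.exp (-((Real.pi : ℂ) * Complex.I * (l : ℂ)) / (n : ℂ) ^ 2) with hq1def
  set e1 : ℂ := Complex.exp ((Real.pi : ℂ) * Complex.I * (l : ℂ)) with he1def
  have hqp : q1 * p = 1 := by
    rw [hq1def, hpdef, ← Complex.exp_add]
    rw [show -((Real.pi : ℂ) * Complex.I * (l : ℂ)) / (n : ℂ) ^ 2 +
        (Real.pi : ℂ) * Complex.I * (l : ℂ) / (n : ℂ) ^ 2 = 0 by ring]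
    exact Complex.exp_zero
  have hshift : ∀ j : ℤ, E (j - 1) = p * E j := by
    intro j
    rw [hEdef, hpdef]
    show Complex.exp _ = _
    rw [← Complex.exp_add]
    congr 1
    push_cast
    field_simp
    ring
  have hEbot : E (-(n:ℤ)^2) = e1 := by
    rw [hEdef, he1def]
    show Complex.exp _ = _
    congr 1
    push_cast
    field_simp
  have hEtop : E ((n:ℤ)^2 - 1) =
      Complex.exp (-((Real.pi : ℂ) * Complex.I * ((n : ℂ) ^ 2 - 1) * (l : ℂ)) / (n : ℂ) ^ 2) := by
    rw [hEdef]
    show Complex.exp _ = _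
    congr 1
    push_cast
    ring
  set N : ℤ := (n:ℤ)^2 with hNdef
  set T : ℂ := ∑ j ∈ Icc (-N) (N-1), g j * E j with hTdef
  have hFTg : discFT n g l = (1/(n:ℂ)) * T := rfl
  have hbot : Icc (-N) (N-1) = insert (-N) (Icc (-N+1) (N-1)) := by
    ext x; simp only [mem_Icc, mem_insert]; omega
  have hbotmem : -N ∉ Icc (-N+1) (N-1) := by simp only [mem_Icc]; omega
  have hT1 : ∑ j ∈ Icc (-N+1) (N-1), g j * E j = T - g (-N) * E (-N) := by
    rw [hTdef, hbot, Finset.sum_insert hbotmem]; ring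
  have htop : Icc (-N) (N-1) = insert (N-1) (Icc (-N) (N-2)) := by
    ext x; simp only [mem_Icc, mem_insert]; omega
  have htopmem : N-1 ∉ Icc (-N) (N-2) := by simp only [mem_Icc]; omega
  have hT2 : ∑ j ∈ Icc (-N) (N-2), g j * E j = T - g (N-1) * E (N-1) := by
    rw [hTdef, htop, Finset.sum_insert htopmem]; ring
  have hD : ∑ j ∈ Icc (-N) (N-1), discDeriv n g j * E j
      = (n:ℂ) * (p * (T - g (-N) * E (-N)) - (T - g (N-1) * E (N-1))) := by
    rw [htop, Finset.sum_insert htopmem]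
    have h0 : discDeriv n g (N-1) = 0 := by simp [discDeriv, hNdef]
    rw [h0, zero_mul, zero_add]
    have hcong : ∑ j ∈ Icc (-N) (N-2), discDeriv n g j * E j
        = ∑ j ∈ Icc (-N) (N-2), ((n:ℂ) * (g (j+1) * E j) - (n:ℂ) * (g j * E j)) := by
      apply Finset.sum_congr rfl
      intro j hj
      simp only [mem_Icc] at hj
      have : j ≠ (n:ℤ)^2 - 1 := by omega
      rw [discDeriv, if_neg this]
      ring
    rw [hcong, Finset.sum_sub_distrib, ← Finset.mul_sum, ← Finset.mul_sum]
    have hsh : ∑ j ∈ Icc (-N) (N-2), g (j+1) * E j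
        = ∑ j ∈ Icc (-N+1) (N-1), g j * E (j-1) := by
      have := Finset.sum_map (Icc (-N) (N-2)) (addRightEmbedding 1)
        (fun j => g j * E (j - 1))
      rw [Finset.map_add_right_Icc] at this
      rw [show N - 2 + 1 = N - 1 by ring] at this
      rw [this]
      apply Finset.sum_congr rfl
      intro j hj
      simp [addRightEmbedding_apply]
    rw [hsh]
    have : ∑ j ∈ Icc (-N+1) (N-1), g j * E (j-1)
        = p * ∑ j ∈ Icc (-N+1) (N-1), g j * E j := by
      rw [Finset.mul_sum]
      apply Finset.sum_congr rfl
      intro j hj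
      rw [hshift j]; ring
    rw [this, hT1, hT2]
    ring
  have hEF : EF n g l = p * (g (-N) * E (-N)) - g (N-1) * E (N-1) := by
    rw [EF, phiF, DF, CF, ← hq1def, ← hpdef, ← he1def, ← hEtop, hEbot, ← hNdef]
    field_simp
    linear_combination (-(g (-N)) * e1) * hqp
  rw [hFTg, psiF, ← hpdef]
  have hFTD : discFT n (discDeriv n g) l
      = (1/(n:ℂ)) * ∑ j ∈ Icc (-N) (N-1), discDeriv n g j * E j := rfl
  rw [hFTD, hD, hEF]
  field_simp
  ring

lemma FF_eq (n : ℕ) (g : ℤ → ℂ) (l : ℤ) :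
    FF n g l = psiF n l * EF n g l + EF n (discDeriv n g) l := by
  have hd0 : discDeriv n g ((n:ℤ)^2 - 1) = 0 := if_pos rfl
  simp only [FF, EF, CF, CF', DF, DF', hd0, zero_mul]
  ring

/-- **Discrete Fourier transform formula.** For `-n² ≤ l ≤ n²-1`, `l ≠ 0`, we have
`ψ_n(l) ≠ 0` and
`ĝ_n(l) = ((Dg)^_n(l) + E_n(l)) / ψ_n(l) = ((D(Dg))^_n(l) + F_n(l)) / ψ_n(l)²`. -/
theorem discFT_formula (n : ℕ) (hn : 0 < n) (g : ℤ → ℂ) (l : ℤ)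
    (hl1 : -(n : ℤ) ^ 2 ≤ l) (hl2 : l ≤ (n : ℤ) ^ 2 - 1) (hl0 : l ≠ 0) :
    psiF n l ≠ 0 ∧
      discFT n g l = (discFT n (discDeriv n g) l + EF n g l) / psiF n l ∧
      discFT n g l = (discFT n (discDeriv n (discDeriv n g)) l + FF n g l) / psiF n l ^ 2 := by
  have hψ := psiF_ne_zero n hn l hl1 hl2 hl0
  have h1 := key_sum_by_parts n hn g l
  have h2 := key_sum_by_parts n hn (discDeriv n g) l
  refine ⟨hψ, ?_, ?_⟩
  · rw [eq_div_iff hψ]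
    linear_combination h1
  · rw [eq_div_iff (pow_ne_zero 2 hψ), FF_eq]
    linear_combination psiF n l * h1 + h2
end

section
/- Let g : ℝ → ℂ be a Schwartz function, and for each positive integer n let g_n : ℤ → ℂ be the sampled function g_n(j) = g(j/n). Then the functions (D(D g_n))^_n(l) and F_n(l) (formed from g_n) are uniformly bounded independently of n: there exists a real constant W such that for all integers n ≥ 2 and all integers l with -n² ≤ l ≤ n²-1, |(D(D g_n))^_n(l)| ≤ W and |F_n(l)| ≤ W. -/
open Complex Finset

lemma decay2 (f : SchwartzMap ℝ ℂ) : ∃ A : ℝ, 0 < A ∧ ∀ x : ℝ, ‖f x‖ ≤ A / (1 + x^2) := by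
  obtain ⟨C0, hC0, h0⟩ := f.decay 0 0
  obtain ⟨C2, hC2, h2⟩ := f.decay 2 0
  refine ⟨C0 + C2, by positivity, fun x => ?_⟩
  have e0 := h0 x; have e2 := h2 x
  rw [norm_iteratedFDeriv_zero] at e0 e2
  rw [le_div_iff₀ (by positivity)]
  have hx : ‖x‖ ^ 2 = x ^ 2 := by rw [Real.norm_eq_abs]; exact sq_abs x
  have hnorm : ‖f x‖ = ‖f x‖ := rfl
  rw [hx, hnorm] at e2
  rw [pow_zero, one_mul, hnorm] at e0
  nlinarith [norm_nonneg (f x), sq_nonneg x]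

lemma mvt_bound {f f' : ℝ → ℂ} (hf : ∀ x, HasDerivAt f (f' x) x) {a b : ℝ} (hab : a ≤ b)
    {K : ℝ} (hK : ∀ t ∈ Set.Icc a b, ‖f' t‖ ≤ K) : ‖f b - f a‖ ≤ K * (b - a) := by
  have := (convex_Icc a b).norm_image_sub_le_of_norm_hasDerivWithin_le
    (fun x _ => (hf x).hasDerivWithinAt) hK (Set.left_mem_Icc.2 hab) (Set.right_mem_Icc.2 hab)
  simpa [Real.norm_eq_abs, _root_.abs_of_nonneg (sub_nonneg.2 hab)] using this

lemma second_diff {g g1 g2 : ℝ → ℂ} (hg : ∀ x, HasDerivAt g (g1 x) x)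
    (hg1 : ∀ x, HasDerivAt g1 (g2 x) x) {a h : ℝ} (hh : 0 ≤ h) {K : ℝ}
    (hK : ∀ t ∈ Set.Icc a (a + 2*h), ‖g2 t‖ ≤ K) :
    ‖g (a + 2*h) - 2 * g (a + h) + g a‖ ≤ K * h * h := by
  have hφ : ∀ t : ℝ, HasDerivAt (fun t => g (t + h) - g t) (g1 (t + h) - g1 t) t := by
    intro t
    have h1 : HasDerivAt (fun t : ℝ => g (t + h)) (g1 (t + h)) t := by
      exact HasDerivAt.comp_add_const t h (hg (t + h))
    exact h1.sub (hg t)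
  have step : ∀ t ∈ Set.Icc a (a + h), ‖g1 (t + h) - g1 t‖ ≤ K * h := by
    intro t ht
    have := mvt_bound hg1 (by linarith : t ≤ t + h)
      (K := K) (fun s hs => hK s ⟨by cases ht; cases hs; linarith, by cases ht; cases hs; linarith⟩)
    simpa using this
  have main := mvt_bound hφ (by linarith : a ≤ a + h) step
  have e1 : a + h + h = a + 2*h := by ring
  rw [e1] at main
  have e2 : g (a + 2*h) - g (a + h) - (g (a + h) - g a) = g (a + 2*h) - 2 * g (a + h) + g a := by ring
  rw [e2] at main
  calc ‖g (a + 2*h) - 2 * g (a + h) + g a‖ ≤ K * h * (a + h - a) := main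
    _ = K * h * h := by ring


lemma tele_nat (n N : ℕ) (hn : 1 ≤ n) :
    ∑ k ∈ Finset.range N, (n:ℝ)^2 / ((n:ℝ)^2 + (k:ℝ)^2) ≤ 4 * n := by
  have key : ∀ k ∈ Finset.range N, (n:ℝ)^2 / ((n:ℝ)^2 + (k:ℝ)^2)
      ≤ 4*(n:ℝ)^2/((n:ℝ)+(k:ℝ)) - 4*(n:ℝ)^2/((n:ℝ)+(k:ℝ)+1) := by
    intro k _
    have hn1 : (1:ℝ) ≤ (n:ℝ) := by exact_mod_cast hn
    have hk : (0:ℝ) ≤ (k:ℝ) := Nat.cast_nonneg k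
    rw [div_sub_div _ _ (by positivity) (by positivity), div_le_div_iff₀ (by positivity) (by positivity)]
    ring_nf
    nlinarith [mul_nonneg (sq_nonneg (n:ℝ)) (sq_nonneg ((n:ℝ)-(k:ℝ))),
      mul_nonneg (mul_nonneg (sq_nonneg (n:ℝ)) (by positivity : (0:ℝ) ≤ (n:ℝ)+(k:ℝ)))
        (by linarith : (0:ℝ) ≤ (n:ℝ)+(k:ℝ)-1)]
  calc ∑ k ∈ Finset.range N, (n:ℝ)^2 / ((n:ℝ)^2 + (k:ℝ)^2)
      ≤ ∑ k ∈ Finset.range N, (4*(n:ℝ)^2/((n:ℝ)+(k:ℝ)) - 4*(n:ℝ)^2/((n:ℝ)+(k:ℝ)+1)) :=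
        Finset.sum_le_sum key
    _ = 4*(n:ℝ)^2/((n:ℝ)+(0:ℕ)) - 4*(n:ℝ)^2/((n:ℝ)+(N:ℕ)) := by
        have := Finset.sum_range_sub' (f := fun k : ℕ => 4*(n:ℝ)^2/((n:ℝ)+(k:ℝ))) N
        simpa [Nat.cast_add, Nat.cast_one, add_assoc] using this
    _ ≤ 4*(n:ℝ)^2/((n:ℝ)) - 0 := by
        have hn0 : (0:ℝ) < n := by exact_mod_cast hn
        gcongr
        · simp
        · positivity
    _ ≤ 4 * n := by
        have hn0 : (0:ℝ) < n := by exact_mod_cast hn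
        rw [sub_zero]
        have h : 4*(n:ℝ)^2/(n:ℝ) = 4*n := by field_simp
        rw [h]

lemma sum_int (n N : ℕ) (hn : 1 ≤ n) :
    ∑ j ∈ Finset.Icc (-(N:ℤ)) ((N:ℤ)-1), (n:ℝ)^2 / ((n:ℝ)^2 + (j:ℝ)^2) ≤ 8 * n := by
  have split : Finset.Icc (-(N:ℤ)) ((N:ℤ)-1)
      = Finset.Icc (-(N:ℤ)) (-1) ∪ Finset.Icc (0:ℤ) ((N:ℤ)-1) := by
    ext j; simp only [Finset.mem_Icc, Finset.mem_union]; omega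
  have disj : Disjoint (Finset.Icc (-(N:ℤ)) (-1)) (Finset.Icc (0:ℤ) ((N:ℤ)-1)) := by
    simp only [Finset.disjoint_left, Finset.mem_Icc]
    intro a h1 h2; omega
  rw [split, Finset.sum_union disj]
  have e1 : ∑ j ∈ Finset.Icc (0:ℤ) ((N:ℤ)-1), (n:ℝ)^2 / ((n:ℝ)^2 + (j:ℝ)^2)
      = ∑ k ∈ Finset.range N, (n:ℝ)^2 / ((n:ℝ)^2 + (k:ℝ)^2) := by
    refine Finset.sum_nbij' (fun j => j.toNat) (fun k => (k:ℤ)) ?_ ?_ ?_ ?_ ?_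
    · intro a ha; simp only [Finset.mem_Icc] at ha; simp only [Finset.mem_range]; omega
    · intro a ha; simp only [Finset.mem_range] at ha; simp only [Finset.mem_Icc]; omega
    · intro a ha; simp only [Finset.mem_Icc] at ha; omega
    · intro a _; simp
    · intro a ha; simp only [Finset.mem_Icc] at ha
      have hc : ((a.toNat:ℕ):ℝ) = (a:ℝ) := by
        exact_mod_cast congrArg (fun z:ℤ => (z:ℝ)) (Int.toNat_of_nonneg ha.1)
      rw [hc]
  have e2 : ∑ j ∈ Finset.Icc (-(N:ℤ)) (-1), (n:ℝ)^2 / ((n:ℝ)^2 + (j:ℝ)^2)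
      = ∑ k ∈ Finset.range N, (n:ℝ)^2 / ((n:ℝ)^2 + ((k:ℝ)+1)^2) := by
    refine Finset.sum_nbij' (fun j => (-j-1).toNat) (fun k => -(k:ℤ)-1) ?_ ?_ ?_ ?_ ?_
    · intro a ha; simp only [Finset.mem_Icc] at ha; simp only [Finset.mem_range]; omega
    · intro a ha; simp only [Finset.mem_range] at ha; simp only [Finset.mem_Icc]; omega
    · intro a ha; simp only [Finset.mem_Icc] at ha; omega
    · intro a ha; simp only [Finset.mem_range] at ha; omega
    · intro a ha; simp only [Finset.mem_Icc] at ha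
      have h1 : (((-a-1).toNat : ℕ) : ℝ) + 1 = -(a:ℝ) := by
        have : ((-a-1).toNat : ℤ) = -a-1 := Int.toNat_of_nonneg (by omega)
        have h2 : (((-a-1).toNat : ℕ) : ℝ) = ((-a-1 : ℤ) : ℝ) := by exact_mod_cast congrArg (fun z : ℤ => (z:ℝ)) this
        rw [h2]; push_cast; ring
      rw [h1]
      congr 2
      ring
  rw [e1, e2]
  have b2 : ∑ k ∈ Finset.range N, (n:ℝ)^2 / ((n:ℝ)^2 + ((k:ℝ)+1)^2)
      ≤ ∑ k ∈ Finset.range N, (n:ℝ)^2 / ((n:ℝ)^2 + (k:ℝ)^2) := by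
    apply Finset.sum_le_sum
    intro k _
    have hk : (0:ℝ) ≤ (k:ℝ) := Nat.cast_nonneg k
    apply div_le_div_of_nonneg_left (by positivity) (by positivity)
    nlinarith
  have t := tele_nat n N hn
  linarith

lemma quad (n : ℝ) (j : ℤ) (t : ℝ) (hn : 2 ≤ n) (h1 : (j:ℝ) ≤ n*t) (h2 : n*t ≤ (j:ℝ)+2) :
    n^2 + (j:ℝ)^2 ≤ 4*n^2*(1+t^2) := by
  have hn0 : (0:ℝ) < n := by linarith
  rcases le_or_gt 0 j with hj | hj
  · have hj' : (0:ℝ) ≤ (j:ℝ) := by exact_mod_cast hj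
    have h4 : (j:ℝ)^2 ≤ (n*t)^2 := by nlinarith
    nlinarith [sq_nonneg t]
  · rcases le_or_gt j (-2) with hj2 | hj2
    · have hj2' : (j:ℝ) ≤ -2 := by exact_mod_cast hj2
      have h3 : n*t ≤ 0 := by linarith
      have h4 : ((j:ℝ)+2)^2 ≤ (n*t)^2 := by nlinarith
      nlinarith [sq_nonneg (3*(j:ℝ)+8)]
    · have hj1 : j = -1 := by omega
      subst hj1
      have : ((-1 : ℤ) : ℝ) = -1 := by norm_num
      rw [this]
      nlinarith [sq_nonneg t]

lemma inv_sq_bound {n t : ℝ} (hn : 2 ≤ n) (h : (n^2-1)^2 ≤ (n*t)^2) : n^2 ≤ 4*(1+t^2) := by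
  have hn0 : (0:ℝ) < n := by linarith
  have h1 : n^2*n^2 ≤ (4*(1+t^2))*n^2 := by nlinarith [sq_nonneg (n^2-2)]
  exact le_of_mul_le_mul_right h1 (by positivity)

lemma pointwise_bound {G G1 G2 : ℝ → ℂ} (hd : ∀ x, HasDerivAt G (G1 x) x)
    (hd1 : ∀ x, HasDerivAt G1 (G2 x) x) {A1 A2 : ℝ} (hA1 : 0 < A1) (hA2 : 0 < A2)
    (hb1 : ∀ x : ℝ, ‖G1 x‖ ≤ A1 / (1 + x^2)) (hb2 : ∀ x : ℝ, ‖G2 x‖ ≤ A2 / (1 + x^2))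
    (n : ℕ) (hn : 2 ≤ n) :
    ∀ j : ℤ,
      ‖discDeriv n (discDeriv n (fun j : ℤ => G ((j:ℝ)/(n:ℝ)))) j‖
        ≤ 4*A2*(n:ℝ)^2/((n:ℝ)^2+(j:ℝ)^2) + 4*A1/(n:ℝ) := by
  intro j
  have hn2 : (2:ℝ) ≤ (n:ℝ) := by exact_mod_cast hn
  have hn0 : (0:ℝ) < (n:ℝ) := by linarith
  set gn : ℤ → ℂ := fun j : ℤ => G ((j:ℝ)/(n:ℝ)) with hgn
  have hpos : (0:ℝ) < 4*A2*(n:ℝ)^2/((n:ℝ)^2+(j:ℝ)^2) := by positivity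
  have hpos1 : (0:ℝ) < 4*A1/(n:ℝ) := by positivity
  by_cases h1 : j = (n:ℤ)^2 - 1
  · simp only [discDeriv, if_pos h1, norm_zero]
    linarith
  · by_cases h2 : j = (n:ℤ)^2 - 2
    · -- boundary term
      have hj1 : j + 1 = (n:ℤ)^2 - 1 := by omega
      have e : discDeriv n (discDeriv n gn) j
          = (n:ℂ) * ((0:ℂ) - (n:ℂ) * (gn (j+1) - gn j)) := by
        simp only [discDeriv, if_neg h1, if_pos hj1]
      have hjr : (j:ℝ) = (n:ℝ)^2 - 2 := by rw [h2]; push_cast; ring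
      have hab : ((j:ℝ))/(n:ℝ) ≤ ((j:ℝ)+1)/(n:ℝ) := by
        gcongr
        linarith
      have hK : ∀ t ∈ Set.Icc ((j:ℝ)/(n:ℝ)) (((j:ℝ)+1)/(n:ℝ)), ‖G1 t‖ ≤ 4*A1/(n:ℝ)^2 := by
        intro t ht
        have hta : (j:ℝ)/(n:ℝ) ≤ t := ht.1
        have hnt : (n:ℝ)^2 - 2 ≤ (n:ℝ)*t := by
          have h' := (div_le_iff₀ hn0).mp hta
          rw [hjr] at h'
          linarith [mul_comm t (n:ℝ)]
        have hsq : ((n:ℝ)^2-2)^2 ≤ ((n:ℝ)*t)^2 := by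
          have h0 : (0:ℝ) ≤ (n:ℝ)^2-2 := by nlinarith
          nlinarith
        calc ‖G1 t‖ ≤ A1/(1+t^2) := hb1 t
          _ ≤ 4*A1/(n:ℝ)^2 := by
            rw [div_le_div_iff₀ (by positivity) (by positivity)]
            nlinarith
      have hmvt := mvt_bound hd hab hK
      have hdiff : ((j:ℝ)+1)/(n:ℝ) - (j:ℝ)/(n:ℝ) = 1/(n:ℝ) := by field_simp; ring
      rw [hdiff] at hmvt
      have e2 : gn (j+1) - gn j = G (((j:ℝ)+1)/(n:ℝ)) - G ((j:ℝ)/(n:ℝ)) := by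
        simp only [hgn]
        congr 2
        push_cast; ring
      have habs : ‖gn (j+1) - gn j‖ ≤ (4*A1/(n:ℝ)^2) * (1/(n:ℝ)) := by
        rw [e2]; exact hmvt
      rw [e, zero_sub, norm_mul, norm_neg, norm_mul, Complex.norm_natCast]
      have hfin : (n:ℝ) * ((n:ℝ) * ‖gn (j+1) - gn j‖) ≤ 4*A1/(n:ℝ) := by
        have step : (n:ℝ) * ((n:ℝ) * ‖gn (j+1) - gn j‖)
            ≤ (n:ℝ) * ((n:ℝ) * ((4*A1/(n:ℝ)^2) * (1/(n:ℝ)))) := by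
          apply mul_le_mul_of_nonneg_left _ (le_of_lt hn0)
          exact mul_le_mul_of_nonneg_left habs (le_of_lt hn0)
        have eqn : (n:ℝ) * ((n:ℝ) * ((4*A1/(n:ℝ)^2) * (1/(n:ℝ)))) = 4*A1/(n:ℝ) := by
          field_simp
        linarith
      linarith
    · -- main case
      have hj1 : ¬ (j + 1 = (n:ℤ)^2 - 1) := by omega
      have e : discDeriv n (discDeriv n gn) j
          = (n:ℂ) * ((n:ℂ) * (gn (j+2) - gn (j+1)) - (n:ℂ) * (gn (j+1) - gn j)) := by
        simp only [discDeriv, if_neg h1, if_neg hj1]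
        norm_num [add_assoc]
      have e2 : discDeriv n (discDeriv n gn) j
          = (n:ℂ)^2 * (gn (j+2) - 2 * gn (j+1) + gn j) := by rw [e]; ring
      have hK : ∀ t ∈ Set.Icc ((j:ℝ)/(n:ℝ)) ((j:ℝ)/(n:ℝ) + 2*(1/(n:ℝ))),
          ‖G2 t‖ ≤ 4*A2*(n:ℝ)^2/((n:ℝ)^2+(j:ℝ)^2) := by
        intro t ht
        have h1t : (j:ℝ) ≤ (n:ℝ)*t := by
          have := ht.1
          calc (j:ℝ) = (n:ℝ)*((j:ℝ)/(n:ℝ)) := by field_simp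
            _ ≤ (n:ℝ)*t := by exact mul_le_mul_of_nonneg_left this (le_of_lt hn0)
        have h2t : (n:ℝ)*t ≤ (j:ℝ)+2 := by
          have := ht.2
          calc (n:ℝ)*t ≤ (n:ℝ)*((j:ℝ)/(n:ℝ) + 2*(1/(n:ℝ))) :=
                mul_le_mul_of_nonneg_left this (le_of_lt hn0)
            _ = (j:ℝ)+2 := by field_simp
        have hq := quad (n:ℝ) j t hn2 h1t h2t
        calc ‖G2 t‖ ≤ A2/(1+t^2) := hb2 t
          _ ≤ 4*A2*(n:ℝ)^2/((n:ℝ)^2+(j:ℝ)^2) := by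
            rw [div_le_div_iff₀ (by positivity) (by positivity)]
            nlinarith
      have hsd := second_diff hd hd1 (by positivity : (0:ℝ) ≤ 1/(n:ℝ)) hK
      have ea : gn j = G ((j:ℝ)/(n:ℝ)) := rfl
      have eb : gn (j+1) = G ((j:ℝ)/(n:ℝ) + 1/(n:ℝ)) := by
        simp only [hgn]
        have h' : (((j+1 : ℤ)):ℝ)/(n:ℝ) = (j:ℝ)/(n:ℝ) + 1/(n:ℝ) := by
          push_cast; ring
        rw [h']
      have ec : gn (j+2) = G ((j:ℝ)/(n:ℝ) + 2*(1/(n:ℝ))) := by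
        simp only [hgn]
        have h' : (((j+2 : ℤ)):ℝ)/(n:ℝ) = (j:ℝ)/(n:ℝ) + 2*(1/(n:ℝ)) := by
          push_cast; ring
        rw [h']
      rw [e2, norm_mul]
      have habs2 : ‖gn (j+2) - 2*gn (j+1) + gn j‖
          ≤ 4*A2*(n:ℝ)^2/((n:ℝ)^2+(j:ℝ)^2) * (1/(n:ℝ)) * (1/(n:ℝ)) := by
        rw [ea, eb, ec]; exact hsd
      have habsn2 : ‖(n:ℂ)^2‖ = (n:ℝ)^2 := by
        rw [norm_pow, Complex.norm_natCast]
      rw [habsn2]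
      calc (n:ℝ)^2 * ‖gn (j+2) - 2*gn (j+1) + gn j‖
          ≤ (n:ℝ)^2 * (4*A2*(n:ℝ)^2/((n:ℝ)^2+(j:ℝ)^2) * (1/(n:ℝ)) * (1/(n:ℝ))) :=
            mul_le_mul_of_nonneg_left habs2 (by positivity)
        _ = 4*A2*(n:ℝ)^2/((n:ℝ)^2+(j:ℝ)^2) := by field_simp
        _ ≤ _ := by linarith

set_option maxHeartbeats 1000000 in
/-- **Uniform boundedness.** For a Schwartz function `g`, sampling `g_n(j) = g(j/n)`, the
quantities `(D(D g_n))^_n(l)` and `F_n(l)` are bounded by a constant `W` independent of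
`n ≥ 2` and of `l` with `-n² ≤ l ≤ n²-1`. -/
theorem unif_bounded (g : SchwartzMap ℝ ℂ) :
    ∃ W : ℝ, ∀ n : ℕ, 2 ≤ n → ∀ l : ℤ, -(n : ℤ) ^ 2 ≤ l → l ≤ (n : ℤ) ^ 2 - 1 →
      ‖discFT n
          (discDeriv n (discDeriv n (fun j : ℤ => g ((j : ℝ) / (n : ℝ))))) l‖ ≤ W ∧
      ‖FF n (fun j : ℤ => g ((j : ℝ) / (n : ℝ))) l‖ ≤ W := by
  obtain ⟨A0, hA0, hb0⟩ := decay2 g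
  have G1s := SchwartzMap.derivCLM ℝ ℂ g
  obtain ⟨A1, hA1, hb1⟩ := decay2 (SchwartzMap.derivCLM ℝ ℂ g)
  obtain ⟨A2, hA2, hb2⟩ := decay2 (SchwartzMap.derivCLM ℝ ℂ (SchwartzMap.derivCLM ℝ ℂ g))
  have hd : ∀ x, HasDerivAt (⇑g) ((SchwartzMap.derivCLM ℝ ℂ g) x) x := fun x => by
    rw [SchwartzMap.derivCLM_apply]; exact ((g.differentiable) x).hasDerivAt
  have hd1 : ∀ x, HasDerivAt (⇑(SchwartzMap.derivCLM ℝ ℂ g))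
      ((SchwartzMap.derivCLM ℝ ℂ (SchwartzMap.derivCLM ℝ ℂ g)) x) x := fun x => by
    rw [SchwartzMap.derivCLM_apply]
    exact (((SchwartzMap.derivCLM ℝ ℂ g).differentiable) x).hasDerivAt
  have hb1' : ∀ x : ℝ, ‖(SchwartzMap.derivCLM ℝ ℂ g) x‖ ≤ A1/(1+x^2) := fun x => hb1 x
  have hb2' : ∀ x : ℝ, ‖(SchwartzMap.derivCLM ℝ ℂ (SchwartzMap.derivCLM ℝ ℂ g)) x‖ ≤ A2/(1+x^2) :=
    fun x => hb2 x
  refine ⟨40*(A0+A1+A2), ?_⟩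
  intro n hn l hl1 hl2
  constructor
  · have hn2 : (2:ℝ) ≤ (n:ℝ) := by exact_mod_cast hn
    have hn0 : (0:ℝ) < (n:ℝ) := by linarith
    have hpb := pointwise_bound hd hd1 hA1 hA2 hb1' hb2' n hn
    set DD := discDeriv n (discDeriv n (fun j : ℤ => g ((j:ℝ)/(n:ℝ)))) with hDD
    have habsexp : ∀ j : ℤ,
        ‖Complex.exp (-((Real.pi:ℂ) * I * (j:ℂ) * (l:ℂ)) / (n:ℂ)^2)‖ = 1 := by
      intro j
      have h' : -((Real.pi:ℂ) * I * (j:ℂ) * (l:ℂ)) / (n:ℂ)^2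
          = ((-(Real.pi * (j:ℝ) * (l:ℝ))/(n:ℝ)^2 : ℝ) : ℂ) * I := by
        push_cast; ring
      rw [h', Complex.norm_exp_ofReal_mul_I]
    have tri : ‖discFT n DD l‖
        ≤ (1/(n:ℝ)) * ∑ j ∈ Finset.Icc (-(n:ℤ)^2) ((n:ℤ)^2-1), ‖DD j‖ := by
      simp only [discFT]
      rw [norm_mul]
      have h1 : ‖1/(n:ℂ)‖ = 1/(n:ℝ) := by
        rw [norm_div, norm_one, Complex.norm_natCast]
      rw [h1]
      apply mul_le_mul_of_nonneg_left _ (by positivity)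
      calc ‖∑ j ∈ Finset.Icc (-(n:ℤ)^2) ((n:ℤ)^2-1),
              DD j * Complex.exp (-((Real.pi:ℂ) * I * (j:ℂ) * (l:ℂ)) / (n:ℂ)^2)‖
          ≤ ∑ j ∈ Finset.Icc (-(n:ℤ)^2) ((n:ℤ)^2-1),
              ‖DD j * Complex.exp (-((Real.pi:ℂ) * I * (j:ℂ) * (l:ℂ)) / (n:ℂ)^2)‖ :=
            norm_sum_le _ _
        _ = ∑ j ∈ Finset.Icc (-(n:ℤ)^2) ((n:ℤ)^2-1), ‖DD j‖ := by
            apply Finset.sum_congr rfl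
            intro j _
            rw [norm_mul, habsexp j, mul_one]
    have hcast : ((n^2 : ℕ) : ℤ) = (n:ℤ)^2 := by push_cast; ring
    have hsumint : ∑ j ∈ Finset.Icc (-(n:ℤ)^2) ((n:ℤ)^2-1), (n:ℝ)^2 / ((n:ℝ)^2 + (j:ℝ)^2)
        ≤ 8 * n := by
      have := sum_int n (n^2) (by omega)
      rwa [hcast] at this
    have hcard : ((Finset.Icc (-(n:ℤ)^2) ((n:ℤ)^2-1)).card : ℝ) = 2*(n:ℝ)^2 := by
      rw [Int.card_Icc]
      have h' : ((n:ℤ)^2-1+1-(-(n:ℤ)^2)) = ((2*n^2 : ℕ) : ℤ) := by push_cast; ring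
      rw [h', Int.toNat_natCast]
      push_cast; ring
    have hsum : ∑ j ∈ Finset.Icc (-(n:ℤ)^2) ((n:ℤ)^2-1), ‖DD j‖
        ≤ 4*A2*(8*(n:ℝ)) + (2*(n:ℝ)^2)*(4*A1/(n:ℝ)) := by
      calc ∑ j ∈ Finset.Icc (-(n:ℤ)^2) ((n:ℤ)^2-1), ‖DD j‖
          ≤ ∑ j ∈ Finset.Icc (-(n:ℤ)^2) ((n:ℤ)^2-1),
              (4*A2*(n:ℝ)^2/((n:ℝ)^2+(j:ℝ)^2) + 4*A1/(n:ℝ)) :=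
            Finset.sum_le_sum (fun j _ => hpb j)
        _ = 4*A2 * (∑ j ∈ Finset.Icc (-(n:ℤ)^2) ((n:ℤ)^2-1), (n:ℝ)^2/((n:ℝ)^2+(j:ℝ)^2))
              + ((Finset.Icc (-(n:ℤ)^2) ((n:ℤ)^2-1)).card : ℝ) * (4*A1/(n:ℝ)) := by
            rw [Finset.sum_add_distrib, Finset.sum_const, Finset.mul_sum, nsmul_eq_mul]
            congr 1
            apply Finset.sum_congr rfl
            intro j _
            rw [mul_div_assoc]
        _ ≤ 4*A2*(8*(n:ℝ)) + (2*(n:ℝ)^2)*(4*A1/(n:ℝ)) := by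
            rw [hcard]
            have h8 : 4*A2 * (∑ j ∈ Finset.Icc (-(n:ℤ)^2) ((n:ℤ)^2-1),
                (n:ℝ)^2/((n:ℝ)^2+(j:ℝ)^2)) ≤ 4*A2*(8*(n:ℝ)) :=
              mul_le_mul_of_nonneg_left hsumint (by positivity)
            linarith
    have hfin : (1/(n:ℝ)) * (4*A2*(8*(n:ℝ)) + (2*(n:ℝ)^2)*(4*A1/(n:ℝ))) = 32*A2 + 8*A1 := by
      field_simp
      ring
    have : ‖discFT n DD l‖ ≤ 32*A2 + 8*A1 := by
      calc ‖discFT n DD l‖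
          ≤ (1/(n:ℝ)) * ∑ j ∈ Finset.Icc (-(n:ℤ)^2) ((n:ℤ)^2-1), ‖DD j‖ := tri
        _ ≤ (1/(n:ℝ)) * (4*A2*(8*(n:ℝ)) + (2*(n:ℝ)^2)*(4*A1/(n:ℝ))) :=
            mul_le_mul_of_nonneg_left hsum (by positivity)
        _ = 32*A2 + 8*A1 := hfin
    linarith [this, hA0.le]
  · have hn2 : (2:ℝ) ≤ (n:ℝ) := by exact_mod_cast hn
    have hn0 : (0:ℝ) < (n:ℝ) := by linarith
    set gn : ℤ → ℂ := fun j : ℤ => g ((j:ℝ)/(n:ℝ)) with hgn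
    have hnsq : (4:ℤ) ≤ (n:ℤ)^2 := by
      have : (2:ℤ) ≤ (n:ℤ) := by exact_mod_cast hn
      nlinarith
    have hne : ¬(-(n:ℤ)^2 = (n:ℤ)^2-1) := by omega
    -- abs of exponentials
    have hexp1 : ‖Complex.exp ((Real.pi:ℂ)*I*(l:ℂ)/(n:ℂ)^2)‖ = 1 := by
      have h' : (Real.pi:ℂ)*I*(l:ℂ)/(n:ℂ)^2 = ((Real.pi*(l:ℝ)/(n:ℝ)^2 : ℝ):ℂ)*I := by
        push_cast; ring
      rw [h', Complex.norm_exp_ofReal_mul_I]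
    have hexp2 : ‖Complex.exp (-((Real.pi:ℂ)*I*(l:ℂ))/(n:ℂ)^2)‖ = 1 := by
      have h' : -((Real.pi:ℂ)*I*(l:ℂ))/(n:ℂ)^2 = ((-(Real.pi*(l:ℝ))/(n:ℝ)^2 : ℝ):ℂ)*I := by
        push_cast; ring
      rw [h', Complex.norm_exp_ofReal_mul_I]
    have hexp3 : ‖Complex.exp ((Real.pi:ℂ)*I*(l:ℂ))‖ = 1 := by
      have h' : (Real.pi:ℂ)*I*(l:ℂ) = ((Real.pi*(l:ℝ) : ℝ):ℂ)*I := by push_cast; ring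
      rw [h', Complex.norm_exp_ofReal_mul_I]
    have hexp4 : ‖Complex.exp (-((Real.pi:ℂ)*I*((n:ℂ)^2-1)*(l:ℂ))/(n:ℂ)^2)‖ = 1 := by
      have h' : -((Real.pi:ℂ)*I*((n:ℂ)^2-1)*(l:ℂ))/(n:ℂ)^2
          = ((-(Real.pi*((n:ℝ)^2-1)*(l:ℝ))/(n:ℝ)^2 : ℝ):ℂ)*I := by push_cast; ring
      rw [h', Complex.norm_exp_ofReal_mul_I]
    -- psi, phi bounds
    have hsub2 : ∀ z : ℂ, ‖z‖ = 1 → ‖z - 1‖ ≤ 2 := by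
      intro z hz
      calc ‖z - 1‖ ≤ ‖z‖ + ‖(1:ℂ)‖ := norm_sub_le z 1
        _ = 2 := by rw [hz, norm_one]; norm_num
    have hpsi : ‖psiF n l‖ ≤ 2*(n:ℝ) := by
      rw [psiF, norm_mul, Complex.norm_natCast]
      have := hsub2 _ hexp1
      nlinarith
    have hphi : ‖phiF n l‖ ≤ 2*(n:ℝ) := by
      rw [phiF, norm_mul, Complex.norm_natCast]
      have := hsub2 _ hexp2
      nlinarith
    -- g values
    have hgneg : ‖gn (-(n:ℤ)^2)‖ ≤ A0/(n:ℝ)^2 := by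
      have ha : ((-(n:ℤ)^2 : ℤ):ℝ)/(n:ℝ) = -(n:ℝ) := by push_cast; field_simp
      calc ‖gn (-(n:ℤ)^2)‖ = ‖g (-(n:ℝ))‖ := by rw [hgn]; simp only; rw [ha]
        _ ≤ A0/(1+(-(n:ℝ))^2) := hb0 _
        _ ≤ A0/(n:ℝ)^2 := by
            rw [div_le_div_iff₀ (by positivity) (by positivity)]
            nlinarith
    have hgtop : ‖gn ((n:ℤ)^2-1)‖ ≤ 4*A0/(n:ℝ)^2 := by
      set x : ℝ := (((n:ℤ)^2-1 : ℤ):ℝ)/(n:ℝ) with hx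
      have hxn : x*(n:ℝ) = (n:ℝ)^2-1 := by rw [hx]; push_cast; field_simp
      have hsq : ((n:ℝ)^2-1)^2 ≤ ((n:ℝ)*x)^2 := by nlinarith
      have hb := inv_sq_bound hn2 hsq
      calc ‖gn ((n:ℤ)^2-1)‖ = ‖g x‖ := rfl
        _ ≤ A0/(1+x^2) := hb0 _
        _ ≤ 4*A0/(n:ℝ)^2 := by
            rw [div_le_div_iff₀ (by positivity) (by positivity)]
            nlinarith
    -- discrete derivative at left endpoint
    have hDg : ‖discDeriv n gn (-(n:ℤ)^2)‖ ≤ 4*A1/(n:ℝ)^2 := by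
      have hval : discDeriv n gn (-(n:ℤ)^2) = (n:ℂ) * (gn (-(n:ℤ)^2 + 1) - gn (-(n:ℤ)^2)) := by
        simp only [discDeriv, if_neg hne]
      set a' : ℝ := ((-(n:ℤ)^2 : ℤ):ℝ)/(n:ℝ) with ha'
      set b' : ℝ := ((-(n:ℤ)^2+1 : ℤ):ℝ)/(n:ℝ) with hb'
      have hab : a' ≤ b' := by
        rw [ha', hb']; gcongr; push_cast; linarith
      have hK : ∀ t ∈ Set.Icc a' b', ‖(SchwartzMap.derivCLM ℝ ℂ g) t‖ ≤ 4*A1/(n:ℝ)^2 := by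
        intro t ht
        have htb : t ≤ b' := ht.2
        have hb'r : b' = (1-(n:ℝ)^2)/(n:ℝ) := by rw [hb']; push_cast; ring
        have hnt : (n:ℝ)*t ≤ 1-(n:ℝ)^2 := by
          rw [hb'r] at htb
          have := (le_div_iff₀ hn0).mp htb
          linarith [mul_comm t (n:ℝ)]
        have hsq : ((n:ℝ)^2-1)^2 ≤ ((n:ℝ)*t)^2 := by
          nlinarith [mul_nonneg (by nlinarith : (0:ℝ) ≤ -((n:ℝ)*t) - ((n:ℝ)^2-1))
            (by nlinarith : (0:ℝ) ≤ -((n:ℝ)*t) + ((n:ℝ)^2-1))]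
        have hq := inv_sq_bound hn2 hsq
        calc ‖(SchwartzMap.derivCLM ℝ ℂ g) t‖ ≤ A1/(1+t^2) := hb1 t
          _ ≤ 4*A1/(n:ℝ)^2 := by
              rw [div_le_div_iff₀ (by positivity) (by positivity)]
              nlinarith
      have hmvt := mvt_bound hd hab hK
      have hdiff : b' - a' = 1/(n:ℝ) := by rw [ha', hb']; push_cast; ring
      rw [hdiff] at hmvt
      have e2 : gn (-(n:ℤ)^2 + 1) - gn (-(n:ℤ)^2) = g b' - g a' := rfl
      rw [hval, norm_mul, Complex.norm_natCast, e2]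
      calc (n:ℝ) * ‖g b' - g a'‖ ≤ (n:ℝ) * (4*A1/(n:ℝ)^2 * (1/(n:ℝ))) :=
            mul_le_mul_of_nonneg_left hmvt (le_of_lt hn0)
        _ = 4*A1/(n:ℝ)^2 := by field_simp
    -- component bounds
    have hDFb : ‖DF n gn l‖ ≤ A0/(n:ℝ)^3 := by
      rw [DF, norm_mul, norm_mul, norm_mul, hexp1, hexp3, mul_one, mul_one]
      have h1 : ‖-(1/(n:ℂ))‖ = 1/(n:ℝ) := by
        rw [norm_neg, norm_div, norm_one, Complex.norm_natCast]
      rw [h1]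
      calc 1/(n:ℝ) * ‖gn (-(n:ℤ)^2)‖ ≤ 1/(n:ℝ) * (A0/(n:ℝ)^2) :=
            mul_le_mul_of_nonneg_left hgneg (by positivity)
        _ = A0/(n:ℝ)^3 := by ring
    have hCFb : ‖CF n gn l‖ ≤ 5*A0/(n:ℝ)^2 := by
      rw [CF]
      refine le_trans (norm_sub_le _ _) ?_
      rw [norm_mul, norm_mul, hexp4, hexp3, mul_one, mul_one]
      have : (4*A0/(n:ℝ)^2) + (A0/(n:ℝ)^2) = 5*A0/(n:ℝ)^2 := by ring
      linarith [hgtop, hgneg]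
    have hCF'b : ‖CF' n gn l‖ ≤ 4*A1/(n:ℝ)^2 := by
      rw [CF', norm_mul, hexp3, mul_one, norm_neg]
      exact hDg
    have hDF'b : ‖DF' n gn l‖ ≤ 4*A1/(n:ℝ)^3 := by
      rw [DF', norm_mul, norm_mul, norm_mul, hexp1, hexp3, mul_one, mul_one]
      have h1 : ‖-(1/(n:ℂ))‖ = 1/(n:ℝ) := by
        rw [norm_neg, norm_div, norm_one, Complex.norm_natCast]
      rw [h1]
      calc 1/(n:ℝ) * ‖discDeriv n gn (-(n:ℤ)^2)‖ ≤ 1/(n:ℝ) * (4*A1/(n:ℝ)^2) :=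
            mul_le_mul_of_nonneg_left hDg (by positivity)
        _ = 4*A1/(n:ℝ)^3 := by ring
    -- assemble
    have split : ‖FF n gn l‖
        ≤ ‖psiF n l * phiF n l * DF n gn l‖ + ‖psiF n l * CF n gn l‖
          + ‖phiF n l * DF' n gn l‖ + ‖CF' n gn l‖ := by
      rw [FF]
      calc ‖psiF n l * phiF n l * DF n gn l - psiF n l * CF n gn l
              + phiF n l * DF' n gn l - CF' n gn l‖
          ≤ ‖psiF n l * phiF n l * DF n gn l - psiF n l * CF n gn l
              + phiF n l * DF' n gn l‖ + ‖CF' n gn l‖ := norm_sub_le _ _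
        _ ≤ ‖psiF n l * phiF n l * DF n gn l - psiF n l * CF n gn l‖
              + ‖phiF n l * DF' n gn l‖ + ‖CF' n gn l‖ := by
            have := norm_add_le (psiF n l * phiF n l * DF n gn l - psiF n l * CF n gn l)
              (phiF n l * DF' n gn l)
            linarith
        _ ≤ _ := by
            have := norm_sub_le (psiF n l * phiF n l * DF n gn l) (psiF n l * CF n gn l)
            linarith
    have hT1 : ‖psiF n l * phiF n l * DF n gn l‖ ≤ 2*A0 := by
      rw [norm_mul, norm_mul]
      calc ‖psiF n l‖ * ‖phiF n l‖ * ‖DF n gn l‖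
          ≤ (2*(n:ℝ)) * (2*(n:ℝ)) * (A0/(n:ℝ)^3) :=
            mul_le_mul (mul_le_mul hpsi hphi (norm_nonneg _) (by positivity)) hDFb
              (norm_nonneg _) (by positivity)
        _ = 4*A0/(n:ℝ) := by field_simp; ring
        _ ≤ 2*A0 := by rw [div_le_iff₀ hn0]; nlinarith
    have hT2 : ‖psiF n l * CF n gn l‖ ≤ 5*A0 := by
      rw [norm_mul]
      calc ‖psiF n l‖ * ‖CF n gn l‖
          ≤ (2*(n:ℝ)) * (5*A0/(n:ℝ)^2) :=
            mul_le_mul hpsi hCFb (norm_nonneg _) (by positivity)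
        _ = 10*A0/(n:ℝ) := by field_simp; ring
        _ ≤ 5*A0 := by rw [div_le_iff₀ hn0]; nlinarith
    have hT3 : ‖phiF n l * DF' n gn l‖ ≤ 2*A1 := by
      rw [norm_mul]
      calc ‖phiF n l‖ * ‖DF' n gn l‖
          ≤ (2*(n:ℝ)) * (4*A1/(n:ℝ)^3) :=
            mul_le_mul hphi hDF'b (norm_nonneg _) (by positivity)
        _ = 8*A1/(n:ℝ)^2 := by field_simp; ring
        _ ≤ 2*A1 := by
            rw [div_le_iff₀ (by positivity)]
            nlinarith [mul_pos hA1 (mul_pos hn0 hn0), sq_nonneg ((n:ℝ)-2), mul_le_mul_of_nonneg_left (by nlinarith : (4:ℝ) ≤ (n:ℝ)^2) (le_of_lt hA1)]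
    have hT4 : ‖CF' n gn l‖ ≤ A1 := by
      calc ‖CF' n gn l‖ ≤ 4*A1/(n:ℝ)^2 := hCF'b
        _ ≤ A1 := by
            rw [div_le_iff₀ (by positivity)]
            nlinarith [mul_le_mul_of_nonneg_left (by nlinarith : (4:ℝ) ≤ (n:ℝ)^2) (le_of_lt hA1)]
    linarith [split, hT1, hT2, hT3, hT4, hA0.le, hA1.le, hA2.le]
end

section
/- Let D₁ ≥ 0 and let g : ℝ → ℂ satisfy |g(x)| ≤ D₁/|x| for all x ≠ 0. For each positive integer n let g_n : ℤ → ℂ be g_n(j) = g(j/n), and form F_n from g_n. Then for all integers n ≥ 2 and all integers l, |F_n(l)| ≤ 16·D₁. -/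
open Complex Finset

private lemma absub (x y : ℂ) : ‖x - y‖ ≤ ‖x‖ + ‖y‖ := by
  simpa [sub_eq_add_neg] using norm_add_le x (-y)

private lemma absexp1 (r : ℝ) : ‖Complex.exp ((r : ℂ) * Complex.I)‖ = 1 :=
  Complex.norm_exp_ofReal_mul_I r

set_option maxHeartbeats 1000000 in
/-- If `|g(x)| ≤ D₁/|x|` for all `x ≠ 0` and `g_n(j) = g(j/n)`, then `|F_n(l)| ≤ 16·D₁`
for all `n ≥ 2` and all integers `l`. -/
theorem FF_bound (D₁ : ℝ) (hD₁ : 0 ≤ D₁) (g : ℝ → ℂ)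
    (hg : ∀ x : ℝ, x ≠ 0 → ‖g x‖ ≤ D₁ / |x|) :
    ∀ n : ℕ, 2 ≤ n → ∀ l : ℤ,
      ‖FF n (fun j : ℤ => g ((j : ℝ) / (n : ℝ))) l‖ ≤ 16 * D₁ := by
  intro n hn l
  set N : ℝ := (n : ℝ) with hNdef
  have hN : (2 : ℝ) ≤ N := by rw [hNdef]; exact_mod_cast hn
  have hN0 : (0 : ℝ) < N := by linarith
  have hNne : N ≠ 0 := ne_of_gt hN0
  have hnC : ((n : ℂ)) ≠ 0 := by rw [hNdef] at hNne; exact_mod_cast hNne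
  have hn2 : (0 : ℝ) < N ^ 2 - 1 := by nlinarith
  set gn : ℤ → ℂ := fun j : ℤ => g ((j : ℝ) / (n : ℝ)) with hgn
  -- exponential absolute values
  have e1 : ‖Complex.exp ((Real.pi : ℂ) * Complex.I * (l : ℂ) / (n : ℂ) ^ 2)‖ = 1 := by
    rw [show (Real.pi : ℂ) * Complex.I * (l : ℂ) / (n : ℂ) ^ 2
        = ((Real.pi * (l : ℝ) / (n : ℝ) ^ 2 : ℝ) : ℂ) * Complex.I by push_cast; ring]
    exact absexp1 _
  have e2 : ‖Complex.exp (-((Real.pi : ℂ) * Complex.I * (l : ℂ)) / (n : ℂ) ^ 2)‖ = 1 := by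
    rw [show -((Real.pi : ℂ) * Complex.I * (l : ℂ)) / (n : ℂ) ^ 2
        = ((-(Real.pi * (l : ℝ)) / (n : ℝ) ^ 2 : ℝ) : ℂ) * Complex.I by push_cast; ring]
    exact absexp1 _
  have e3 : ‖Complex.exp ((Real.pi : ℂ) * Complex.I * (l : ℂ))‖ = 1 := by
    rw [show (Real.pi : ℂ) * Complex.I * (l : ℂ)
        = ((Real.pi * (l : ℝ) : ℝ) : ℂ) * Complex.I by push_cast; ring]
    exact absexp1 _
  have e4 : ‖Complex.exp
      (-((Real.pi : ℂ) * Complex.I * ((n : ℂ) ^ 2 - 1) * (l : ℂ)) / (n : ℂ) ^ 2)‖ = 1 := by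
    rw [show -((Real.pi : ℂ) * Complex.I * ((n : ℂ) ^ 2 - 1) * (l : ℂ)) / (n : ℂ) ^ 2
        = ((-(Real.pi * ((n : ℝ) ^ 2 - 1) * (l : ℝ)) / (n : ℝ) ^ 2 : ℝ) : ℂ) * Complex.I by
          push_cast; ring]
    exact absexp1 _
  -- bounds on g values
  have ha : ‖gn ((n : ℤ) ^ 2 - 1)‖ ≤ D₁ * N / (N ^ 2 - 1) := by
    have hx : ((N ^ 2 - 1) / N : ℝ) ≠ 0 := by positivity
    have := hg ((N ^ 2 - 1) / N) hx
    have habs : |(N ^ 2 - 1) / N| = (N ^ 2 - 1) / N := abs_of_pos (by positivity)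
    rw [habs] at this
    have harg : ((((n : ℤ) ^ 2 - 1 : ℤ) : ℝ) / (n : ℝ)) = (N ^ 2 - 1) / N := by push_cast; ring
    rw [hgn]; simp only [harg]
    calc ‖g ((N ^ 2 - 1) / N)‖ ≤ D₁ / ((N ^ 2 - 1) / N) := this
      _ = D₁ * N / (N ^ 2 - 1) := by field_simp
  have hb : ‖gn (-(n : ℤ) ^ 2)‖ ≤ D₁ / N := by
    have hx : (-N : ℝ) ≠ 0 := by simp [hNne]
    have := hg (-N) hx
    have habs : |(-N : ℝ)| = N := by rw [abs_neg, abs_of_pos hN0]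
    rw [habs] at this
    have harg : (((-(n : ℤ) ^ 2 : ℤ) : ℝ) / (n : ℝ)) = -N := by
      push_cast; field_simp; ring
    rw [hgn]; simp only [harg]; exact this
  have hc : ‖gn (-(n : ℤ) ^ 2 + 1)‖ ≤ D₁ * N / (N ^ 2 - 1) := by
    have hx : ((1 - N ^ 2) / N : ℝ) ≠ 0 := by
      apply div_ne_zero _ hNne; intro h; nlinarith
    have := hg ((1 - N ^ 2) / N) hx
    have habs : |(1 - N ^ 2) / N| = (N ^ 2 - 1) / N := by
      rw [abs_div, abs_of_pos hN0, abs_sub_comm, abs_of_pos hn2]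
    rw [habs] at this
    have harg : (((-(n : ℤ) ^ 2 + 1 : ℤ) : ℝ) / (n : ℝ)) = (1 - N ^ 2) / N := by push_cast; ring
    rw [hgn]; simp only [harg]
    calc ‖g ((1 - N ^ 2) / N)‖ ≤ D₁ / ((N ^ 2 - 1) / N) := this
      _ = D₁ * N / (N ^ 2 - 1) := by field_simp
  set s : ℝ := D₁ * N / (N ^ 2 - 1) + D₁ / N with hsdef
  have hs0 : 0 ≤ s := by positivity
  -- discrete derivative bound
  have hne : (-(n : ℤ) ^ 2) ≠ (n : ℤ) ^ 2 - 1 := by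
    have : (2 : ℤ) ≤ (n : ℤ) := by exact_mod_cast hn
    nlinarith
  have hDg : ‖discDeriv n gn (-(n : ℤ) ^ 2)‖ ≤ N * s := by
    rw [discDeriv, if_neg hne, norm_mul]
    have : ‖(n : ℂ)‖ = N := by
      rw [hNdef]; exact_mod_cast Complex.norm_natCast n
    rw [this]
    apply mul_le_mul_of_nonneg_left _ (le_of_lt hN0)
    calc ‖gn (-(n : ℤ) ^ 2 + 1) - gn (-(n : ℤ) ^ 2)‖
        ≤ ‖gn (-(n : ℤ) ^ 2 + 1)‖ + ‖gn (-(n : ℤ) ^ 2)‖ :=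
          absub _ _
      _ ≤ s := add_le_add hc hb
  have habsn : ‖(n : ℂ)‖ = N := by
    rw [hNdef]; exact_mod_cast Complex.norm_natCast n
  -- component bounds
  have hψ : ‖psiF n l‖ ≤ 2 * N := by
    rw [psiF, norm_mul, habsn]
    calc N * ‖Complex.exp ((Real.pi : ℂ) * Complex.I * (l : ℂ) / (n : ℂ) ^ 2) - 1‖
        ≤ N * (‖Complex.exp ((Real.pi : ℂ) * Complex.I * (l : ℂ) / (n : ℂ) ^ 2)‖
            + ‖(1:ℂ)‖) := by
          exact mul_le_mul_of_nonneg_left (absub _ _) (le_of_lt hN0)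
      _ = 2 * N := by rw [e1]; simp; ring
  have hφ : ‖phiF n l‖ ≤ 2 * N := by
    rw [phiF, norm_mul, habsn]
    calc N * ‖Complex.exp (-((Real.pi : ℂ) * Complex.I * (l : ℂ)) / (n : ℂ) ^ 2) - 1‖
        ≤ N * (‖Complex.exp (-((Real.pi : ℂ) * Complex.I * (l : ℂ)) / (n : ℂ) ^ 2)‖
            + ‖(1:ℂ)‖) := by
          exact mul_le_mul_of_nonneg_left (absub _ _) (le_of_lt hN0)
      _ = 2 * N := by rw [e2]; simp; ring
  have hD : ‖DF n gn l‖ ≤ 1 / N * (D₁ / N) := by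
    rw [DF, norm_mul, norm_mul, norm_mul, e1, e3, mul_one, mul_one]
    have h1 : ‖-(1 / (n : ℂ))‖ = 1 / N := by
      rw [norm_neg, norm_div, habsn]; simp
    rw [h1]
    exact mul_le_mul_of_nonneg_left hb (by positivity)
  have hC : ‖CF n gn l‖ ≤ s := by
    rw [CF]
    calc ‖_‖ ≤ ‖gn ((n : ℤ) ^ 2 - 1) *
          Complex.exp (-((Real.pi : ℂ) * Complex.I * ((n : ℂ) ^ 2 - 1) * (l : ℂ)) / (n : ℂ) ^ 2)‖
          + ‖gn (-(n : ℤ) ^ 2) * Complex.exp ((Real.pi : ℂ) * Complex.I * (l : ℂ))‖ :=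
        absub _ _
      _ ≤ s := by
          rw [norm_mul, norm_mul, e4, e3, mul_one, mul_one]
          exact add_le_add ha hb
  have hC' : ‖CF' n gn l‖ ≤ N * s := by
    rw [CF', norm_mul, norm_neg, e3, mul_one]
    exact hDg
  have hD' : ‖DF' n gn l‖ ≤ s := by
    rw [DF', norm_mul, norm_mul, norm_mul, e1, e3, mul_one, mul_one, norm_neg,
      norm_div, habsn]
    simp only [norm_one]
    calc 1 / N * ‖discDeriv n gn (-(n : ℤ) ^ 2)‖ ≤ 1 / N * (N * s) :=
        mul_le_mul_of_nonneg_left hDg (by positivity)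
      _ = s := by field_simp
  -- assemble
  have hsplit : ‖FF n gn l‖
      ≤ ‖psiF n l‖ * ‖phiF n l‖ * ‖DF n gn l‖
        + ‖psiF n l‖ * ‖CF n gn l‖
        + ‖phiF n l‖ * ‖DF' n gn l‖
        + ‖CF' n gn l‖ := by
    rw [FF]
    calc ‖psiF n l * phiF n l * DF n gn l - psiF n l * CF n gn l
            + phiF n l * DF' n gn l - CF' n gn l‖
        ≤ ‖psiF n l * phiF n l * DF n gn l - psiF n l * CF n gn l
            + phiF n l * DF' n gn l‖ + ‖CF' n gn l‖ := absub _ _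
      _ ≤ ‖psiF n l * phiF n l * DF n gn l - psiF n l * CF n gn l‖
            + ‖phiF n l * DF' n gn l‖ + ‖CF' n gn l‖ := by
          exact add_le_add (norm_add_le (_ : ℂ) _) le_rfl
      _ ≤ ‖psiF n l * phiF n l * DF n gn l‖ + ‖psiF n l * CF n gn l‖
            + ‖phiF n l * DF' n gn l‖ + ‖CF' n gn l‖ := by
          exact add_le_add (add_le_add (absub _ _) le_rfl) le_rfl
      _ = _ := by rw [norm_mul, norm_mul, norm_mul, norm_mul]
  have key : ‖FF n gn l‖
      ≤ 2 * N * (2 * N) * (1 / N * (D₁ / N)) + 2 * N * s + 2 * N * s + N * s := by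
    refine hsplit.trans ?_
    have t1 : ‖psiF n l‖ * ‖phiF n l‖ * ‖DF n gn l‖
        ≤ 2 * N * (2 * N) * (1 / N * (D₁ / N)) := by
      gcongr <;> first | exact norm_nonneg _ | assumption
    have t2 : ‖psiF n l‖ * ‖CF n gn l‖ ≤ 2 * N * s := by
      gcongr <;> first | exact norm_nonneg _ | assumption
    have t3 : ‖phiF n l‖ * ‖DF' n gn l‖ ≤ 2 * N * s := by
      gcongr <;> first | exact norm_nonneg _ | assumption
    exact add_le_add (add_le_add (add_le_add t1 t2) t3) hC'
  have hterm1 : 2 * N * (2 * N) * (1 / N * (D₁ / N)) = 4 * D₁ := by field_simp; ring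
  have hNs : N * s ≤ 7 / 3 * D₁ := by
    have h1 : N * s = D₁ * N ^ 2 / (N ^ 2 - 1) + D₁ := by
      rw [hsdef]; field_simp
    have h2 : D₁ * N ^ 2 / (N ^ 2 - 1) ≤ 4 / 3 * D₁ := by
      rw [div_le_iff₀ hn2]
      have h4 : (0:ℝ) ≤ N ^ 2 - 4 := by nlinarith
      linarith [mul_nonneg hD₁ h4]
    linarith
  calc ‖FF n gn l‖ ≤ 4 * D₁ + 2 * N * s + 2 * N * s + N * s := by
        rw [← hterm1]; exact key
    _ ≤ 4 * D₁ + 5 * (7 / 3 * D₁) := by linarith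
    _ ≤ 16 * D₁ := by linarith
end

section
/- Let g : ℝ → ℝ be twice continuously differentiable with g' bounded and g'' Lebesgue integrable on ℝ. For each positive integer n let g_n : ℤ → ℂ be g_n(j) = g(j/n). Then for all positive integers n and all integers l with -n² ≤ l ≤ n²-1, |(D(D g_n))^_n(l)| ≤ ∫_ℝ |g''(x)| dx + sup_{x ∈ ℝ} |g'(x)|. -/
open Complex Finset MeasureTheory

private lemma sum_Icc_top_int (F : ℤ → ℝ) (a b : ℤ) (h : a ≤ b) :
    ∑ j ∈ Finset.Icc a b, F j = ∑ j ∈ Finset.Icc a (b-1), F j + F b := by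
  have he : Finset.Icc a b = insert b (Finset.Icc a (b-1)) := by
    ext j; simp only [Finset.mem_Icc, Finset.mem_insert]; omega
  rw [he, Finset.sum_insert (by simp only [Finset.mem_Icc]; omega)]
  ring

private lemma sum_Icc_eq_range_int (F : ℤ → ℝ) (a : ℤ) (K : ℕ) :
    ∑ j ∈ Finset.Icc a (a + K - 1), F j = ∑ k ∈ Finset.range K, F (a + k) := by
  induction K with
  | zero => simp
  | succ K ih =>
    have h2 : (((K : ℕ) + 1 : ℕ) : ℤ) = (K : ℤ) + 1 := by push_cast; ring
    rw [h2, show a + ((K : ℤ) + 1) - 1 = a + K by ring,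
      sum_Icc_top_int F a (a + K) (by omega), Finset.sum_range_succ,
      show a + (K : ℤ) - 1 = a + (K : ℤ) - 1 from rfl, ih]

/-- If `g : ℝ → ℝ` is twice continuously differentiable with `g'` bounded and `g''`
Lebesgue integrable, then for all `n > 0` and `-n² ≤ l ≤ n²-1`,
`|(D(D g_n))^_n(l)| ≤ ∫ |g''| + sup |g'|`, where `g_n(j) = g(j/n)`. -/
theorem discFT_second_deriv_bound (g : ℝ → ℝ) (hg : ContDiff ℝ 2 g)
    (hb : ∃ B : ℝ, ∀ x : ℝ, |deriv g x| ≤ B)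
    (hi : Integrable (fun x => deriv (deriv g) x)) :
    ∀ n : ℕ, 0 < n → ∀ l : ℤ, -(n : ℤ) ^ 2 ≤ l → l ≤ (n : ℤ) ^ 2 - 1 →
      ‖discFT n
          (discDeriv n (discDeriv n (fun j : ℤ => ((g ((j : ℝ) / (n : ℝ)) : ℝ) : ℂ)))) l‖ ≤
        (∫ x : ℝ, |deriv (deriv g) x|) + ⨆ x : ℝ, |deriv g x| := by
  intro n hn l _ _
  have hn' : (0:ℝ) < (n:ℝ) := by exact_mod_cast hn
  obtain ⟨B, hB⟩ := hb
  have hbdd : BddAbove (Set.range fun x => |deriv g x|) := ⟨B, by rintro _ ⟨x, rfl⟩; exact hB x⟩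
  set M := ⨆ x : ℝ, |deriv g x| with hM
  have hMle : ∀ x, |deriv g x| ≤ M := fun x => le_ciSup hbdd x
  have hM0 : (0:ℝ) ≤ M := le_trans (abs_nonneg _) (hMle 0)
  set I2 : ℝ := ∫ x : ℝ, |deriv (deriv g) x| with hI2
  have hI20 : (0:ℝ) ≤ I2 := integral_nonneg fun x => abs_nonneg _
  obtain ⟨hdg, -, hg'⟩ := (contDiff_succ_iff_deriv (n := 1)).1 (by exact_mod_cast hg)
  have hdg' : Differentiable ℝ (deriv g) := hg'.differentiable one_ne_zero
  have hint2 : Integrable (fun x => |deriv (deriv g) x|) := hi.abs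
  have key2 : ∀ x y : ℝ, x ≤ y →
      |deriv g y - deriv g x| ≤ ∫ t in x..y, |deriv (deriv g) t| := by
    intro x y hxy
    have hftc : ∫ t in x..y, deriv (deriv g) t = deriv g y - deriv g x :=
      intervalIntegral.integral_deriv_eq_sub (fun t _ => hdg' t) hi.intervalIntegrable
    rw [← hftc]
    exact intervalIntegral.abs_integral_le_integral_abs hxy
  have hmvt : ∀ j : ℤ, ∃ c ∈ Set.Ioo ((j:ℝ)/n) (((j:ℝ)+1)/n),
      deriv g c = (g (((j:ℝ)+1)/n) - g ((j:ℝ)/n)) / (((j:ℝ)+1)/n - (j:ℝ)/n) := by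
    intro j
    have hab : (j:ℝ)/n < ((j:ℝ)+1)/n := by gcongr; linarith
    exact exists_deriv_eq_slope g hab hdg.continuous.continuousOn hdg.differentiableOn
  choose ξ hmem hval using hmvt
  have hξval : ∀ j : ℤ, deriv g (ξ j) = (n:ℝ) * (g (((j:ℝ)+1)/n) - g ((j:ℝ)/n)) := by
    intro j
    rw [hval j, show ((j:ℝ)+1)/n - (j:ℝ)/n = 1/n by field_simp; ring]
    field_simp
  have hξlt : ∀ j : ℤ, ξ j < ξ (j+1) := by
    intro j
    have h1 := (hmem j).2
    have h2 := (hmem (j+1)).1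
    push_cast at h2
    linarith
  set N : ℤ := (n:ℤ)^2 with hN
  have hN1 : (1:ℤ) ≤ N := by
    rw [hN]; have : (1:ℤ) ≤ (n:ℤ) := by exact_mod_cast hn
    nlinarith
  set gn : ℤ → ℂ := fun j : ℤ => ((g ((j : ℝ) / (n : ℝ)) : ℝ) : ℂ) with hgn
  set Dg := discDeriv n gn with hDgdef
  set DD := discDeriv n Dg with hDDdef
  have hDg : ∀ j : ℤ, j ≠ N - 1 → Dg j = ((deriv g (ξ j) : ℝ) : ℂ) := by
    intro j hj
    rw [hDgdef]
    show (if j = (n:ℤ)^2 - 1 then 0 else (n:ℂ) * (gn (j+1) - gn j)) = _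
    rw [if_neg (hN ▸ hj), hξval j]
    simp only [hgn]
    push_cast
    ring
  have hDgabs : ∀ j : ℤ, ‖Dg j‖ ≤ M := by
    intro j
    by_cases hj : j = N - 1
    · rw [hDgdef]
      show ‖if j = (n:ℤ)^2 - 1 then 0 else (n:ℂ) * (gn (j+1) - gn j)‖ ≤ M
      rw [if_pos (hN ▸ hj)]
      simpa using hM0
    · rw [hDg j hj, Complex.norm_real, Real.norm_eq_abs]
      exact hMle _
  have hDD : ∀ j : ℤ, j ≤ N - 3 →
      ‖DD j‖ = (n:ℝ) * |deriv g (ξ (j+1)) - deriv g (ξ j)| := by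
    intro j hj
    have h1 : j ≠ N - 1 := by omega
    have h2 : j + 1 ≠ N - 1 := by omega
    rw [hDDdef]
    show ‖if j = (n:ℤ)^2 - 1 then 0 else (n:ℂ) * (Dg (j+1) - Dg j)‖ = _
    rw [if_neg (hN ▸ h1), hDg _ h2, hDg _ h1, ← Complex.ofReal_sub, norm_mul,
      Complex.norm_real, Real.norm_eq_abs, Complex.norm_natCast]
  have hDDtop : ‖DD (N-2)‖ ≤ (n:ℝ) * M := by
    have h1 : N - 2 ≠ N - 1 := by omega
    rw [hDDdef]
    show ‖if N-2 = (n:ℤ)^2 - 1 then 0 else (n:ℂ) * (Dg (N-2+1) - Dg (N-2))‖ ≤ _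
    rw [if_neg (hN ▸ h1)]
    have hz : Dg (N-2+1) = 0 := by
      rw [hDgdef]
      show (if N-2+1 = (n:ℤ)^2 - 1 then 0 else (n:ℂ) * (gn (N-2+1+1) - gn (N-2+1))) = 0
      rw [if_pos (by rw [← hN]; ring)]
    rw [hz, zero_sub, norm_mul, Complex.norm_natCast, norm_neg]
    exact mul_le_mul_of_nonneg_left (hDgabs _) hn'.le
  have hDDlast : DD (N-1) = 0 := by
    rw [hDDdef]
    show (if N-1 = (n:ℤ)^2 - 1 then 0 else (n:ℂ) * (Dg (N-1+1) - Dg (N-1))) = 0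
    rw [if_pos (by rw [← hN])]
  -- step 1 : triangle inequality
  have step1 : ‖discFT n DD l‖
      ≤ (1/(n:ℝ)) * ∑ j ∈ Finset.Icc (-N) (N-1), ‖DD j‖ := by
    simp only [discFT, ← hN]
    rw [norm_mul]
    have habs1 : ‖1/(n:ℂ)‖ = 1/(n:ℝ) := by
      rw [norm_div, norm_one, Complex.norm_natCast]
    rw [habs1]
    refine mul_le_mul_of_nonneg_left ?_ (by positivity)
    refine le_trans (norm_sum_le _ _) (le_of_eq ?_)
    refine Finset.sum_congr rfl fun j _ => ?_
    rw [norm_mul]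
    have he : -((Real.pi:ℂ) * Complex.I * (j:ℂ) * (l:ℂ)) / (n:ℂ)^2
        = ((-(Real.pi * (j:ℝ) * (l:ℝ)) / (n:ℝ)^2 : ℝ) : ℂ) * Complex.I := by
      push_cast; ring
    rw [he, Complex.norm_exp_ofReal_mul_I, mul_one]
  -- split the sum
  have hsplit1 : ∑ j ∈ Finset.Icc (-N) (N-1), ‖DD j‖
      = ∑ j ∈ Finset.Icc (-N) (N-2), ‖DD j‖ + ‖DD (N-1)‖ := by
    have h := sum_Icc_top_int (fun j => ‖DD j‖) (-N) (N-1) (by omega)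
    rw [show N-1-1 = N-2 by ring] at h
    exact h
  have hsplit2 : ∑ j ∈ Finset.Icc (-N) (N-2), ‖DD j‖
      = ∑ j ∈ Finset.Icc (-N) (N-3), ‖DD j‖ + ‖DD (N-2)‖ := by
    have h := sum_Icc_top_int (fun j => ‖DD j‖) (-N) (N-2) (by omega)
    rw [show N-2-1 = N-3 by ring] at h
    exact h
  -- middle sum
  set K : ℕ := 2 * n^2 - 2 with hK
  have hKN : -N + (K:ℤ) - 1 = N - 3 := by
    have h2 : (2:ℕ) ≤ 2*n^2 := by nlinarith
    rw [hK]
    push_cast [Nat.cast_sub h2]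
    rw [← hN]
    ring
  have hmid : ∑ j ∈ Finset.Icc (-N) (N-3), ‖DD j‖ ≤ (n:ℝ) * I2 := by
    rw [← hKN, sum_Icc_eq_range_int]
    set a : ℕ → ℝ := fun k => ξ (-N + k) with ha
    have hak : ∀ k : ℕ, a (k+1) = ξ (-N + (k:ℤ) + 1) := by
      intro k; rw [ha]; congr 1; push_cast; ring
    have hatel : ∀ k : ℕ, a k < a (k+1) := by
      intro k; rw [hak k, ha]; exact hξlt (-N + k)
    have hsum : ∑ k ∈ Finset.range K, ‖DD (-N + k)‖
        ≤ ∑ k ∈ Finset.range K, (n:ℝ) * ∫ t in a k..a (k+1), |deriv (deriv g) t| := by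
      refine Finset.sum_le_sum fun k hk => ?_
      have hkK : (k:ℤ) ≤ (K:ℤ) - 1 := by
        have := Finset.mem_range.1 hk; omega
      have hjle : -N + (k:ℤ) ≤ N - 3 := by omega
      rw [hDD _ hjle]
      refine mul_le_mul_of_nonneg_left ?_ hn'.le
      simp only [ha]
      push_cast
      rw [show -N + ((k:ℤ)+1) = -N + (k:ℤ) + 1 by ring]
      exact key2 _ _ (hξlt (-N+(k:ℤ))).le
    have htel : ∑ k ∈ Finset.range K, ∫ t in a k..a (k+1), |deriv (deriv g) t|
        = ∫ t in (a 0)..(a K), |deriv (deriv g) t| :=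
      intervalIntegral.sum_integral_adjacent_intervals fun k _ => hint2.intervalIntegrable
    have hmono : a 0 ≤ a K := (strictMono_nat_of_lt_succ hatel).monotone (Nat.zero_le K)
    have hfin : ∫ t in (a 0)..(a K), |deriv (deriv g) t| ≤ I2 := by
      rw [intervalIntegral.integral_of_le hmono, hI2]
      exact setIntegral_le_integral hint2 (Filter.Eventually.of_forall fun x => abs_nonneg _)
    calc ∑ k ∈ Finset.range K, ‖DD (-N + k)‖
        ≤ ∑ k ∈ Finset.range K, (n:ℝ) * ∫ t in a k..a (k+1), |deriv (deriv g) t| := hsum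
      _ = (n:ℝ) * ∑ k ∈ Finset.range K, ∫ t in a k..a (k+1), |deriv (deriv g) t| := by
          rw [Finset.mul_sum]
      _ = (n:ℝ) * ∫ t in (a 0)..(a K), |deriv (deriv g) t| := by rw [htel]
      _ ≤ (n:ℝ) * I2 := mul_le_mul_of_nonneg_left hfin hn'.le
  have hStot : ∑ j ∈ Finset.Icc (-N) (N-1), ‖DD j‖ ≤ (n:ℝ) * I2 + (n:ℝ) * M := by
    rw [hsplit1, hsplit2, hDDlast, norm_zero, add_zero]
    linarith [hmid, hDDtop]
  calc ‖discFT n DD l‖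
      ≤ (1/(n:ℝ)) * ∑ j ∈ Finset.Icc (-N) (N-1), ‖DD j‖ := step1
    _ ≤ (1/(n:ℝ)) * ((n:ℝ) * I2 + (n:ℝ) * M) :=
        mul_le_mul_of_nonneg_left hStot (by positivity)
    _ = I2 + M := by field_simp
end

section
/- Let g : ℝ → ℂ be a Schwartz function, and for each positive integer n define the step function g_{n,ext} : ℝ → ℂ by g_{n,ext}(x) = g(⌊n x⌋ / n), where ⌊·⌋ is the integer floor. Then each g_{n,ext} is Lebesgue integrable on ℝ, and lim_{n→∞} ∫_ℝ |g(x) - g_{n,ext}(x)| dx = 0. -/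
open Complex MeasureTheory Filter

lemma schwartz_decay_bound (g : SchwartzMap ℝ ℂ) :
    ∃ D : ℝ, 0 ≤ D ∧ ∀ x : ℝ, ‖g x‖ ≤ D * (1 + x ^ 2)⁻¹ := by
  obtain ⟨C0, hC0⟩ := g.decay 0 0
  obtain ⟨C2, hC2⟩ := g.decay 2 0
  have h0 : ∀ x : ℝ, ‖g x‖ ≤ C0 := by
    intro x
    have := hC0.2 x
    simpa [norm_iteratedFDeriv_zero] using this
  have h2 : ∀ x : ℝ, x ^ 2 * ‖g x‖ ≤ C2 := by
    intro x
    have := hC2.2 x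
    simpa [norm_iteratedFDeriv_zero, Real.norm_eq_abs, sq_abs] using this
  refine ⟨C0 + C2, ?_, ?_⟩
  · have h0' := h0 0
    have h2' := h2 0
    have := norm_nonneg (g 0)
    nlinarith
  · intro x
    have hpos : (0 : ℝ) < 1 + x ^ 2 := by positivity
    rw [← div_eq_mul_inv, le_div_iff₀ hpos]
    have := h0 x
    have := h2 x
    nlinarith

lemma floor_div_bounds {n : ℕ} (hn : 0 < n) (x : ℝ) :
    |x - (⌊(n : ℝ) * x⌋ : ℝ) / (n : ℝ)| ≤ 1 / (n : ℝ) := by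
  have hn' : (0 : ℝ) < n := by exact_mod_cast hn
  have h1 : ((⌊(n : ℝ) * x⌋ : ℝ)) ≤ (n : ℝ) * x := Int.floor_le _
  have h2 : (n : ℝ) * x < (⌊(n : ℝ) * x⌋ : ℝ) + 1 := Int.lt_floor_add_one _
  have hy1 : (⌊(n : ℝ) * x⌋ : ℝ) / (n : ℝ) ≤ x := by
    rw [div_le_iff₀ hn']; nlinarith
  have hy2 : x ≤ (⌊(n : ℝ) * x⌋ : ℝ) / (n : ℝ) + 1 / (n : ℝ) := by
    rw [← add_div, le_div_iff₀ hn']; nlinarith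
  rw [abs_le]
  constructor <;> [linarith; linarith]

/-- For a Schwartz function `g`, the step functions `g_{n,ext}(x) = g(⌊n x⌋/n)` are
Lebesgue integrable, and `∫ |g - g_{n,ext}| → 0` as `n → ∞`. -/
theorem step_approx (g : SchwartzMap ℝ ℂ) :
    (∀ n : ℕ, 0 < n → Integrable (fun x : ℝ => g ((⌊(n : ℝ) * x⌋ : ℝ) / (n : ℝ)))) ∧
    Tendsto (fun n : ℕ =>
        ∫ x : ℝ, ‖g x - g ((⌊(n : ℝ) * x⌋ : ℝ) / (n : ℝ))‖)
      atTop (nhds 0) := by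
  obtain ⟨D, hD0, hD⟩ := schwartz_decay_bound g
  have hmeas : ∀ n : ℕ,
      AEStronglyMeasurable (fun x : ℝ => g ((⌊(n : ℝ) * x⌋ : ℝ) / (n : ℝ))) volume := by
    intro n
    have hm : Measurable (fun x : ℝ => (⌊(n : ℝ) * x⌋ : ℝ) / (n : ℝ)) := by
      exact (measurable_from_top.comp ((measurable_const.mul measurable_id).floor)).div_const _
    exact (g.continuous.measurable.comp hm).aestronglyMeasurable
  have key : ∀ n : ℕ, 0 < n → ∀ x : ℝ,
      ‖g ((⌊(n : ℝ) * x⌋ : ℝ) / (n : ℝ))‖ ≤ 3 * D * (1 + x ^ 2)⁻¹ := by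
    intro n hn x
    set y : ℝ := (⌊(n : ℝ) * x⌋ : ℝ) / (n : ℝ) with hy
    have hn' : (1 : ℝ) ≤ n := by exact_mod_cast hn
    have h1n : 1 / (n : ℝ) ≤ 1 := by
      rw [div_le_one (by linarith)]; linarith
    have hxy : |x - y| ≤ 1 := (floor_div_bounds hn x).trans h1n
    obtain ⟨hxy1, hxy2⟩ := abs_le.mp hxy
    have h3 : 1 + x ^ 2 ≤ 3 * (1 + y ^ 2) := by
      nlinarith [sq_nonneg (x - 2 * y)]
    calc ‖g y‖ ≤ D * (1 + y ^ 2)⁻¹ := hD y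
      _ ≤ 3 * D * (1 + x ^ 2)⁻¹ := by
          rw [← div_eq_mul_inv, ← div_eq_mul_inv,
            div_le_div_iff₀ (by positivity) (by positivity)]
          nlinarith
  have hbound3 : Integrable (fun x : ℝ => 3 * D * (1 + x ^ 2)⁻¹) :=
    integrable_inv_one_add_sq.const_mul _
  have hint : ∀ n : ℕ, 0 < n →
      Integrable (fun x : ℝ => g ((⌊(n : ℝ) * x⌋ : ℝ) / (n : ℝ))) := by
    intro n hn
    exact hbound3.mono' (hmeas n) (ae_of_all _ fun x => key n hn x)
  refine ⟨hint, ?_⟩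
  have hbound4 : Integrable (fun x : ℝ => 4 * D * (1 + x ^ 2)⁻¹) :=
    integrable_inv_one_add_sq.const_mul _
  have main : Tendsto (fun n : ℕ =>
      ∫ x : ℝ, ‖g x - g ((⌊(n : ℝ) * x⌋ : ℝ) / (n : ℝ))‖) atTop
      (nhds (∫ _ : ℝ, (0 : ℝ))) := by
    apply tendsto_integral_filter_of_dominated_convergence
      (fun x : ℝ => 4 * D * (1 + x ^ 2)⁻¹)
    · filter_upwards with n
      exact (g.continuous.aestronglyMeasurable.sub (hmeas n)).norm
    · filter_upwards [eventually_gt_atTop 0] with n hn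
      filter_upwards with x
      have h1 : ‖g x‖ ≤ D * (1 + x ^ 2)⁻¹ := hD x
      have h2 := key n hn x
      have : ‖g x - g ((⌊(n : ℝ) * x⌋ : ℝ) / (n : ℝ))‖ ≤ 4 * D * (1 + x ^ 2)⁻¹ := by
        calc ‖g x - g ((⌊(n : ℝ) * x⌋ : ℝ) / (n : ℝ))‖
            ≤ ‖g x‖ + ‖g ((⌊(n : ℝ) * x⌋ : ℝ) / (n : ℝ))‖ := norm_sub_le _ _
          _ ≤ 4 * D * (1 + x ^ 2)⁻¹ := by nlinarith [hD x, key n hn x]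
      simpa [Real.norm_eq_abs, _root_.abs_of_nonneg (norm_nonneg _)] using this
    · exact hbound4
    · filter_upwards with x
      have hy : Tendsto (fun n : ℕ => (⌊(n : ℝ) * x⌋ : ℝ) / (n : ℝ)) atTop (nhds x) := by
        rw [tendsto_iff_norm_sub_tendsto_zero]
        apply squeeze_zero_norm' ?_ tendsto_one_div_atTop_nhds_zero_nat
        filter_upwards [eventually_gt_atTop 0] with n hn
        simpa [Real.norm_eq_abs, abs_abs, abs_sub_comm] using floor_div_bounds hn x
      have hgy : Tendsto (fun n : ℕ => g x - g ((⌊(n : ℝ) * x⌋ : ℝ) / (n : ℝ)))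
          atTop (nhds (g x - g x)) :=
        Tendsto.sub tendsto_const_nhds ((g.continuous.tendsto x).comp hy)
      simpa using hgy.norm
  have : (∫ _ : ℝ, (0 : ℝ)) = 0 := integral_zero _ _
  rw [this] at main
  exact main
end

section
/- Let C ≥ 0 and let g : ℝ → ℂ satisfy |g(x)| ≤ C/x² for all x ≠ 0. For positive integers n and N, define g_{n,ext} : ℝ → ℂ by g_{n,ext}(x) = g(⌊n x⌋ / n), where ⌊·⌋ is the integer floor. Then ∫_{|x| > N} |g_{n,ext}(x)| dx ≤ 3C/N. -/
open Complex MeasureTheory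
open Set

lemma lint_Ioi_sq (C b : ℝ) (hC : 0 ≤ C) (hb : 0 < b) :
    ∫⁻ x in Ioi b, ENNReal.ofReal (C / x ^ 2) = ENNReal.ofReal (C / b) := by
  have hint : IntegrableOn (fun x : ℝ => C * x ^ (-2 : ℝ)) (Ioi b) :=
    (integrableOn_Ioi_rpow_of_lt (by norm_num) hb).const_mul C
  have hcongr : ∀ x ∈ Ioi b, C / x ^ 2 = C * x ^ (-2 : ℝ) := by
    intro x hx
    rw [Real.rpow_neg (le_of_lt (hb.trans hx)), Real.rpow_two]
    ring
  rw [setLIntegral_congr_fun measurableSet_Ioi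
    (fun x hx => by rw [hcongr x hx])]
  rw [← ofReal_integral_eq_lintegral_ofReal hint]
  · rw [MeasureTheory.integral_const_mul, integral_Ioi_rpow_of_lt (by norm_num) hb]
    norm_num
    rw [Real.rpow_neg_one, mul_comm, inv_mul_eq_div]
  · filter_upwards [self_mem_ae_restrict measurableSet_Ioi] with x hx
    have : (0:ℝ) < x := hb.trans hx
    positivity

lemma Fmeas (C : ℝ) : Measurable fun y : ℝ => ENNReal.ofReal (C / y ^ 2) :=
  (measurable_const.div (measurable_id.pow_const 2)).ennreal_ofReal

lemma lint_Iio_sq (C b : ℝ) (hC : 0 ≤ C) (hb : 0 < b) :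
    ∫⁻ x in Iio (-b), ENNReal.ofReal (C / x ^ 2) = ENNReal.ofReal (C / b) := by
  have hmp := Measure.measurePreserving_neg (volume : Measure ℝ)
  have h1 := setLIntegral_map (μ := (volume : Measure ℝ)) (s := Ioi b)
    measurableSet_Ioi (Fmeas C) measurable_neg
  rw [hmp.map_eq] at h1
  have h2 : Neg.neg ⁻¹' Ioi b = Iio (-b) := by
    ext x; simp only [mem_preimage, mem_Ioi, mem_Iio]; constructor <;> intro h <;> linarith
  rw [← lint_Ioi_sq C b hC hb, h1, h2]
  congr 1; ext x; rw [neg_sq]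

lemma lint_shift_sq (C b c : ℝ) (hC : 0 ≤ C) (hb : 0 < b) :
    ∫⁻ x in Ioi (b + c), ENNReal.ofReal (C / (x - c) ^ 2) = ENNReal.ofReal (C / b) := by
  have hmp := measurePreserving_add_right (volume : Measure ℝ) (-c)
  have h1 := setLIntegral_map (μ := (volume : Measure ℝ)) (s := Ioi b)
    measurableSet_Ioi (Fmeas C) (measurable_add_const (-c))
  rw [hmp.map_eq] at h1
  have h2 : (fun x : ℝ => x + (-c)) ⁻¹' Ioi b = Ioi (b + c) := by
    ext x; simp only [mem_preimage, mem_Ioi]; constructor <;> intro h <;> linarith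
  simp only [sub_eq_add_neg]
  rw [← lint_Ioi_sq C b hC hb, h1, h2]


/-- If `|g(x)| ≤ C/x²` for `x ≠ 0`, then the step function `g_{n,ext}(x) = g(⌊n x⌋/n)`
satisfies `∫_{|x| > N} |g_{n,ext}(x)| dx ≤ 3C/N`. -/
theorem step_tail_bound (C : ℝ) (hC : 0 ≤ C) (g : ℝ → ℂ)
    (hg : ∀ x : ℝ, x ≠ 0 → ‖g x‖ ≤ C / x ^ 2)
    (n N : ℕ) (hn : 0 < n) (hN : 0 < N) :
    ∫⁻ x in {x : ℝ | (N : ℝ) < |x|},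
        ‖g ((⌊(n : ℝ) * x⌋ : ℝ) / (n : ℝ))‖₊ ∂volume ≤ ENNReal.ofReal (3 * C / N) := by
  set f : ℝ → ENNReal := fun x => (‖g ((⌊(n : ℝ) * x⌋ : ℝ) / (n : ℝ))‖₊ : ENNReal) with hf
  have hn' : (0:ℝ) < n := by exact_mod_cast hn
  have hN' : (0:ℝ) < N := by exact_mod_cast hN
  have hN1 : (1:ℝ) ≤ N := by exact_mod_cast hN
  have hn1 : (1:ℝ) ≤ n := by exact_mod_cast hn
  set a : ℝ := N + 1/n with ha
  have hset : {x : ℝ | (N : ℝ) < |x|} = Iio (-(N:ℝ)) ∪ (Ioc (N:ℝ) a ∪ Ioi a) := by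
    rw [Ioc_union_Ioi_eq_Ioi (le_add_of_nonneg_right (by positivity) : (N:ℝ) ≤ a)]
    ext x
    simp only [mem_setOf_eq, lt_abs, mem_union, mem_Iio, mem_Ioi]
    constructor
    · rintro (h | h); · exact Or.inr h
      exact Or.inl (by linarith)
    · rintro (h | h); · exact Or.inr (by linarith)
      exact Or.inl h
  rw [hset]
  -- bound on each value
  have hbound : ∀ x : ℝ, ∀ y : ℝ, y ≠ 0 →
      y = (⌊(n : ℝ) * x⌋ : ℝ) / (n : ℝ) → f x ≤ ENNReal.ofReal (C / y ^ 2) := by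
    intro x y hy hyx
    rw [hf]
    simp only [← ENNReal.ofReal_coe_nnreal, coe_nnnorm]
    apply ENNReal.ofReal_le_ofReal
    rw [← hyx]
    exact hg y hy
  calc ∫⁻ x in Iio (-(N:ℝ)) ∪ (Ioc (N:ℝ) a ∪ Ioi a), f x
      ≤ (∫⁻ x in Iio (-(N:ℝ)), f x) + ((∫⁻ x in Ioc (N:ℝ) a, f x) + ∫⁻ x in Ioi a, f x) := by
        refine (lintegral_union_le _ _ _).trans ?_
        exact add_le_add le_rfl (lintegral_union_le _ _ _)
    _ ≤ ENNReal.ofReal (C / N) + (ENNReal.ofReal (C / N) + ENNReal.ofReal (C / N)) := by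
        gcongr
        · -- negative side
          rw [← lint_Iio_sq C N hC hN']
          apply setLIntegral_mono' measurableSet_Iio
          intro x hx
          simp only [mem_Iio] at hx
          set y : ℝ := (⌊(n : ℝ) * x⌋ : ℝ) / (n : ℝ) with hy
          have hyx : y ≤ x := by
            rw [hy, div_le_iff₀ hn']
            calc ((⌊(n : ℝ) * x⌋ : ℝ)) ≤ (n : ℝ) * x := Int.floor_le _
              _ = x * n := by ring
          have hyneg : y < 0 := by linarith
          refine (hbound x y (ne_of_lt hyneg) hy).trans ?_
          apply ENNReal.ofReal_le_ofReal
          apply div_le_div_of_nonneg_left hC (by nlinarith : (0:ℝ) < x ^ 2)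
          have h1 : |x| ≤ |y| := abs_le_abs_of_nonpos (by linarith) hyx
          calc x ^ 2 = |x| ^ 2 := (_root_.sq_abs x).symm
            _ ≤ |y| ^ 2 := by gcongr
            _ = y ^ 2 := _root_.sq_abs y
        · -- middle part
          have key : ∀ x ∈ Ioc (N:ℝ) a, f x ≤ ENNReal.ofReal (C / N ^ 2) := by
            intro x hx
            simp only [mem_Ioc] at hx
            set y : ℝ := (⌊(n : ℝ) * x⌋ : ℝ) / (n : ℝ) with hy
            have hyN : (N:ℝ) ≤ y := by
              rw [hy, le_div_iff₀ hn']
              have : ((n * N : ℤ) : ℝ) ≤ (n:ℝ) * x := by push_cast; nlinarith [hx.1]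
              have h2 := Int.le_floor.mpr this
              calc (N:ℝ) * n = ((n * N : ℤ) : ℝ) := by push_cast; ring
                _ ≤ (⌊(n : ℝ) * x⌋ : ℝ) := by exact_mod_cast h2
            refine (hbound x y (lt_of_lt_of_le hN' hyN).ne' hy).trans ?_
            apply ENNReal.ofReal_le_ofReal
            apply div_le_div_of_nonneg_left hC (by positivity)
            gcongr
          calc ∫⁻ x in Ioc (N:ℝ) a, f x
              ≤ ∫⁻ _ in Ioc (N:ℝ) a, ENNReal.ofReal (C / N ^ 2) :=
                setLIntegral_mono' measurableSet_Ioc key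
            _ = ENNReal.ofReal (C / N ^ 2) * volume (Ioc (N:ℝ) a) := setLIntegral_const _ _
            _ = ENNReal.ofReal (C / N ^ 2) * ENNReal.ofReal (1/n) := by
                rw [Real.volume_Ioc]; congr 1; rw [ha]; ring
            _ = ENNReal.ofReal (C / N ^ 2 * (1/n)) := by
                rw [ENNReal.ofReal_mul (by positivity)]
            _ ≤ ENNReal.ofReal (C / N) := by
                apply ENNReal.ofReal_le_ofReal
                rw [div_mul_eq_mul_div, mul_one_div, div_div]
                apply div_le_div_of_nonneg_left hC hN'
                nlinarith
        · -- outer part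
          have := lint_shift_sq C N (1/n) hC hN'
          rw [← ha] at this
          rw [← this]
          apply setLIntegral_mono' measurableSet_Ioi
          intro x hx
          simp only [mem_Ioi] at hx
          set y : ℝ := (⌊(n : ℝ) * x⌋ : ℝ) / (n : ℝ) with hy
          have hx' : (N:ℝ) + 1/n < x := ha ▸ hx
          have hxgt : (0:ℝ) < x - 1/n := by linarith
          have hylt : x - 1/n < y := by
            rw [hy, lt_div_iff₀ hn']
            have := Int.sub_one_lt_floor ((n:ℝ) * x)
            have h3 : (x - 1/n) * n = n * x - 1 := by field_simp
            rw [h3]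
            exact_mod_cast this
          refine (hbound x y (hxgt.trans hylt).ne' hy).trans ?_
          apply ENNReal.ofReal_le_ofReal
          apply div_le_div_of_nonneg_left hC (by positivity)
          gcongr
    _ = ENNReal.ofReal (3 * C / N) := by
        rw [← ENNReal.ofReal_add (by positivity) (by positivity),
          ← ENNReal.ofReal_add (by positivity) (by positivity)]
        congr 1; ring
end
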